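/- arXiv:2203.13578 — 5 statements merged into one kernel-verified Lean document; each statement's English description precedes it below -/
import Mathlib

section
/- If an (N+1)×(N+1) real matrix M admits a positive bidiagonal factorization M = L_1^{[N]} L_2^{[N]} ⋯ L_p^{[N]} U^{[N]} (with all parameters α_i > 0), then M is oscillatory. -/
open Polynomial

noncomputable def Lmat (p sz k : ℕ) (α : ℕ → ℝ) : Matrix (Fin sz) (Fin sz) ℝ :=
  Matrix.of fun i j : Fin sz => if (i : ℕ) = (j : ℕ) then 1
    else if (i : ℕ) = (j : ℕ) + 1 then α (k + 1 + (j : ℕ) * (p + 1)) else 0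

noncomputable def Umat (p sz : ℕ) (α : ℕ → ℝ) : Matrix (Fin sz) (Fin sz) ℝ :=
  Matrix.of fun i j : Fin sz => if (j : ℕ) = (i : ℕ) + 1 then 1
    else if (i : ℕ) = (j : ℕ) then α (1 + (i : ℕ) * (p + 1)) else 0

def TotallyNonneg {n : ℕ} (M : Matrix (Fin n) (Fin n) ℝ) : Prop :=
  ∀ (k : ℕ) (r c : Fin k → Fin n), StrictMono r → StrictMono c →
    0 ≤ (M.submatrix r c).det

def TotallyPos {n : ℕ} (M : Matrix (Fin n) (Fin n) ℝ) : Prop :=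
  ∀ (k : ℕ) (r c : Fin k → Fin n), StrictMono r → StrictMono c →
    0 < (M.submatrix r c).det

def Oscillatory {n : ℕ} (M : Matrix (Fin n) (Fin n) ℝ) : Prop :=
  TotallyNonneg M ∧ M.det ≠ 0 ∧ ∃ m : ℕ, 0 < m ∧ TotallyPos (M ^ m)

/-! ### Auxiliary development -/

namespace Osc

variable {n k : ℕ}

/-- strictly monotone maps into `Fin n` grow at least as fast as the identity -/
lemma sm_le {f : Fin k → Fin n} (hf : StrictMono f) (i : Fin k) : (i : ℕ) ≤ (f i : ℕ) := by
  obtain ⟨m, hm⟩ := i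
  induction m with
  | zero => exact Nat.zero_le _
  | succ m ih =>
      have h1 : m < k := Nat.lt_of_succ_lt hm
      have h2 := ih h1
      have h3 : f ⟨m, h1⟩ < f ⟨m + 1, hm⟩ := hf (by simp [Fin.lt_def])
      have h4 : (f ⟨m, h1⟩ : ℕ) < (f ⟨m + 1, hm⟩ : ℕ) := h3
      have e1 : ((⟨m, h1⟩ : Fin k) : ℕ) = m := rfl
      have e2 : ((⟨m + 1, hm⟩ : Fin k) : ℕ) = m + 1 := rfl
      omega

/-- adjacency pattern of a bidiagonal matrix; `a` is the row index, `b` the column index.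
`lo = true` means lower bidiagonal. -/
def adjB (lo : Bool) (a b : ℕ) : Prop := b = a ∨ (if lo then b + 1 = a else b = a + 1)

/-- a nonnegative bidiagonal-type matrix -/
def Nice (lo : Bool) (G : Matrix (Fin n) (Fin n) ℝ) : Prop :=
  (∀ i j, 0 ≤ G i j) ∧ ∀ i j : Fin n, G i j ≠ 0 → adjB lo (i : ℕ) (j : ℕ)

/-- Cauchy–Binet style expansion of a minor of a product, over all (not necessarily
monotone) column selections. -/
lemma expand (A B : Matrix (Fin n) (Fin n) ℝ) (r c : Fin k → Fin n) :
    ((A * B).submatrix r c).det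
      = ∑ f : Fin k → Fin n, (∏ i, A (r i) (f i)) * ((B.submatrix f c).det) := by
  have h1 : ((A * B).submatrix r c)
      = fun i => ∑ x : Fin n, A (r i) x • (fun j => B x (c j)) := by
    funext i j
    simp [Matrix.mul_apply, Matrix.submatrix_apply, Finset.sum_apply]
  have h2 : ((A * B).submatrix r c).det
      = Matrix.detRowAlternating ((A * B).submatrix r c) := rfl
  rw [h2, h1]
  rw [show (Matrix.detRowAlternating (fun i => ∑ x : Fin n, A (r i) x • (fun j => B x (c j))) : ℝ)
      = Matrix.detRowAlternating.toMultilinearMap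
        (fun i => ∑ x : Fin n, A (r i) x • (fun j => B x (c j))) from rfl]
  rw [MultilinearMap.map_sum]
  refine Finset.sum_congr rfl fun f _ => ?_
  rw [MultilinearMap.map_smul_univ]
  rfl

lemma term_nonneg {lo : Bool} {A B : Matrix (Fin n) (Fin n) ℝ} (hA : Nice lo A)
    (hB : TotallyNonneg B) {r c f : Fin k → Fin n}
    (hr : StrictMono r) (hc : StrictMono c) :
    0 ≤ (∏ i, A (r i) (f i)) * ((B.submatrix f c).det) := by
  by_cases hz : ∃ i, A (r i) (f i) = 0
  · obtain ⟨i, hi⟩ := hz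
    rw [Finset.prod_eq_zero (Finset.mem_univ i) hi, zero_mul]
  push_neg at hz
  have hadj : ∀ i, adjB lo ((r i : ℕ)) ((f i : ℕ)) := fun i => hA.2 _ _ (hz i)
  by_cases hinj : Function.Injective f
  · have hsm : StrictMono f := by
      intro i j hij
      have h1 : (r i : ℕ) < (r j : ℕ) := hr hij
      have h2 := hadj i
      have h3 := hadj j
      have h4 : (f i : ℕ) ≤ (f j : ℕ) := by
        cases lo <;> simp only [adjB, if_true, if_false, Bool.false_eq_true] at h2 h3 <;> omega
      exact lt_of_le_of_ne (by exact h4) (fun h => (hinj.ne (ne_of_lt hij)) (Fin.ext (by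
        exact_mod_cast congrArg (fun x : Fin n => (x : ℕ)) h)))
    exact mul_nonneg (Finset.prod_nonneg fun i _ => hA.1 _ _) (hB k f c hsm hc)
  · rw [Function.not_injective_iff] at hinj
    obtain ⟨a, b, hfe, hne⟩ := hinj
    have : (B.submatrix f c).det = 0 :=
      Matrix.det_zero_of_row_eq hne (funext fun x => by simp [Matrix.submatrix_apply, hfe])
    rw [this, mul_zero]

lemma tn_mul {lo : Bool} {A B : Matrix (Fin n) (Fin n) ℝ} (hA : Nice lo A)
    (hB : TotallyNonneg B) : TotallyNonneg (A * B) := by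
  intro k r c hr hc
  rw [expand]
  exact Finset.sum_nonneg fun f _ => term_nonneg hA hB hr hc

lemma tp_mul {lo : Bool} {A B : Matrix (Fin n) (Fin n) ℝ} (hA : Nice lo A)
    (hB : TotallyNonneg B) {r c f : Fin k → Fin n}
    (hr : StrictMono r) (hc : StrictMono c) (hf : StrictMono f)
    (hpos : ∀ i, 0 < A (r i) (f i)) (hdet : 0 < (B.submatrix f c).det) :
    0 < ((A * B).submatrix r c).det := by
  rw [expand]
  exact Finset.sum_pos' (fun g _ => term_nonneg hA hB hr hc)
    ⟨f, Finset.mem_univ f,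
      mul_pos (Finset.prod_pos fun i _ => hpos i) hdet⟩

lemma tn_one : TotallyNonneg (1 : Matrix (Fin n) (Fin n) ℝ) := by
  intro k r c hr hc
  rw [Matrix.det_apply]
  refine Finset.sum_nonneg fun σ _ => ?_
  by_cases h : ∀ i, ((1 : Matrix (Fin n) (Fin n) ℝ).submatrix r c) (σ i) i ≠ 0
  · have hrc : ∀ i, r (σ i) = c i := by
      intro i
      have := h i
      simp only [Matrix.submatrix_apply, Matrix.one_apply, ne_eq, ite_eq_right_iff,
        one_ne_zero, imp_false, not_not] at this
      exact this
    have hσ : StrictMono ⇑σ := by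
      intro i j hij
      have : r (σ i) < r (σ j) := by rw [hrc i, hrc j]; exact hc hij
      exact hr.lt_iff_lt.1 this
    have hinv : StrictMono ⇑σ.symm := by
      intro a b hab
      rcases lt_or_ge (σ.symm a) (σ.symm b) with h | h
      · exact h
      · exfalso
        have h2 : b ≤ a := by
          have := hσ.monotone h
          simpa using this
        exact absurd hab (not_lt.2 h2)
    have hσ1 : σ = 1 := by
      refine Equiv.ext fun x => Fin.ext (le_antisymm ?_ ?_)
      · have h1 := sm_le hinv (σ x)
        simpa using h1
      · exact sm_le hσ x
    subst hσ1
    simp only [Equiv.Perm.sign_one, one_smul]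
    refine Finset.prod_nonneg fun i _ => ?_
    simp only [Matrix.submatrix_apply, Matrix.one_apply, Equiv.Perm.one_apply]
    split <;> norm_num
  · push_neg at h
    obtain ⟨i, hi⟩ := h
    rw [Finset.prod_eq_zero (f := fun j => ((1 : Matrix (Fin n) (Fin n) ℝ).submatrix r c) (σ j) j)
      (Finset.mem_univ i) hi, smul_zero]

lemma tn_list_mul (Gs : List (Matrix (Fin n) (Fin n) ℝ))
    (h : ∀ G ∈ Gs, ∃ lo, Nice lo G) {B : Matrix (Fin n) (Fin n) ℝ}
    (hB : TotallyNonneg B) : TotallyNonneg (Gs.prod * B) := by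
  induction Gs with
  | nil => simpa using hB
  | cons G Gs ih =>
      rw [List.prod_cons, mul_assoc]
      obtain ⟨lo, hlo⟩ := h G List.mem_cons_self
      exact tn_mul hlo (ih fun G' hG' => h G' (List.mem_cons_of_mem _ hG'))

lemma idle_list (Gs : List (Matrix (Fin n) (Fin n) ℝ))
    (h : ∀ G ∈ Gs, (∃ lo, Nice lo G) ∧ ∀ i, 0 < G i i)
    {B : Matrix (Fin n) (Fin n) ℝ} (hB : TotallyNonneg B)
    {v c : Fin k → Fin n} (hv : StrictMono v) (hc : StrictMono c)
    (hd : 0 < (B.submatrix v c).det) :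
    0 < ((Gs.prod * B).submatrix v c).det := by
  induction Gs with
  | nil => simpa using hd
  | cons G Gs ih =>
      rw [List.prod_cons, mul_assoc]
      obtain ⟨⟨lo, hlo⟩, hdiag⟩ := h G List.mem_cons_self
      have hrest : ∀ G' ∈ Gs, (∃ lo, Nice lo G') ∧ ∀ i, 0 < G' i i :=
        fun G' hG' => h G' (List.mem_cons_of_mem _ hG')
      exact tp_mul hlo
        (tn_list_mul Gs (fun G' hG' => (hrest G' hG').1) hB)
        hv hc hv (fun i => hdiag (v i)) (ih hrest)

end Osc

/-! ### Facts about the specific bidiagonal matrices -/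

namespace Osc

variable {p n : ℕ} {α : ℕ → ℝ}

lemma nice_L (hα : ∀ i, 1 ≤ i → 0 < α i) (m : ℕ) : Nice true (Lmat p n m α) := by
  constructor
  · intro i j
    simp only [Lmat, Matrix.of_apply]
    split_ifs with h1 h2
    · norm_num
    · exact (hα _ (by omega)).le
    · exact le_refl 0
  · intro i j hne
    simp only [Lmat, Matrix.of_apply] at hne
    split_ifs at hne with h1 h2
    · exact Or.inl h1.symm
    · exact Or.inr (by simp only [if_true]; omega)
    · exact absurd rfl hne

lemma nice_U (hα : ∀ i, 1 ≤ i → 0 < α i) : Nice false (Umat p n α) := by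
  constructor
  · intro i j
    simp only [Umat, Matrix.of_apply]
    split_ifs with h1 h2
    · norm_num
    · exact (hα _ (by omega)).le
    · exact le_refl 0
  · intro i j hne
    simp only [Umat, Matrix.of_apply] at hne
    split_ifs at hne with h1 h2
    · exact Or.inr (by simp; omega)
    · exact Or.inl h2.symm
    · exact absurd rfl hne

lemma L_diag (m : ℕ) (i : Fin n) : Lmat p n m α i i = 1 := by
  simp [Lmat]

lemma U_diag (i : Fin n) : Umat p n α i i = α (1 + (i : ℕ) * (p + 1)) := by
  simp [Umat]

lemma L_sub (m : ℕ) {i j : Fin n} (h : (i : ℕ) = (j : ℕ) + 1) :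
    Lmat p n m α i j = α (m + 1 + (j : ℕ) * (p + 1)) := by
  simp only [Lmat, Matrix.of_apply]
  rw [if_neg (by omega), if_pos h]

lemma U_super {i j : Fin n} (h : (j : ℕ) = (i : ℕ) + 1) :
    Umat p n α i j = 1 := by
  simp only [Umat, Matrix.of_apply]
  rw [if_pos h]

end Osc

/-! ### The full matrix and the positivity chain -/

namespace Osc

variable (p N : ℕ) (α : ℕ → ℝ)

noncomputable def Ls : List (Matrix (Fin (N + 1)) (Fin (N + 1)) ℝ) :=
  (List.range p).map fun k => Lmat p (N + 1) (k + 1) α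

noncomputable def Mfull : Matrix (Fin (N + 1)) (Fin (N + 1)) ℝ :=
  (Ls p N α).prod * Umat p (N + 1) α

variable {p N α}

lemma nice_of_mem (hα : ∀ i, 1 ≤ i → 0 < α i) :
    ∀ G ∈ Ls p N α ++ [Umat p (N + 1) α], (∃ lo, Nice lo G) ∧ ∀ i, 0 < G i i := by
  intro G hG
  rcases List.mem_append.1 hG with hG | hG
  · simp only [Ls, List.mem_map, List.mem_range] at hG
    obtain ⟨m, _, rfl⟩ := hG
    exact ⟨⟨true, nice_L hα _⟩, fun i => by rw [L_diag]; norm_num⟩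
  · simp only [List.mem_singleton] at hG
    subst hG
    exact ⟨⟨false, nice_U hα⟩, fun i => by rw [U_diag]; exact hα _ (by omega)⟩

lemma Mfull_eq : Mfull p N α = (Ls p N α ++ [Umat p (N + 1) α]).prod := by
  rw [List.prod_append, List.prod_singleton]; rfl

lemma tn_Mpow (hα : ∀ i, 1 ≤ i → 0 < α i) (t : ℕ) :
    TotallyNonneg ((Mfull p N α) ^ t) := by
  induction t with
  | zero => simpa using tn_one
  | succ t ih =>
      rw [pow_succ']
      nth_rewrite 1 [Mfull_eq]
      exact tn_list_mul _ (fun G hG => (nice_of_mem hα G hG).1) ih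

/-- the up-phase: raise `v` to `c` using the `U` factor of each block -/
lemma up_phase (hα : ∀ i, 1 ≤ i → 0 < α i) :
    ∀ (t : ℕ) {k : ℕ} (v c : Fin k → Fin (N + 1)), StrictMono v → StrictMono c →
      (∀ i, (v i : ℕ) ≤ (c i : ℕ)) → (∀ i, (c i : ℕ) ≤ (v i : ℕ) + t) →
      0 < (((Mfull p N α) ^ t).submatrix v c).det := by
  intro t
  induction t with
  | zero =>
      intro k v c hv hc h1 h2
      have hvc : v = c := funext fun i => Fin.ext (le_antisymm (h1 i) (by simpa using h2 i))
      subst hvc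
      rw [pow_zero, Matrix.submatrix_one _ hv.injective, Matrix.det_one]
      norm_num
  | succ t ih =>
      intro k v c hv hc h1 h2
      set w : Fin k → Fin (N + 1) :=
        fun i => ⟨min ((v i : ℕ) + 1) (c i : ℕ),
          lt_of_le_of_lt (min_le_right _ _) (c i).isLt⟩ with hw_def
      have hw : StrictMono w := by
        intro i j hij
        have hv' : (v i : ℕ) < (v j : ℕ) := hv hij
        have hc' : (c i : ℕ) < (c j : ℕ) := hc hij
        simp only [hw_def, Fin.lt_def]
        omega
      have h1w : ∀ i, (w i : ℕ) ≤ (c i : ℕ) := fun i => min_le_right _ _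
      have h2w : ∀ i, (c i : ℕ) ≤ (w i : ℕ) + t := by
        intro i
        have := h2 i
        have := h1 i
        simp only [hw_def]
        omega
      have hrec := ih w c hw hc h1w h2w
      have hpos : ∀ i, 0 < Umat p (N + 1) α (v i) (w i) := by
        intro i
        rcases Nat.lt_or_ge (v i : ℕ) (c i : ℕ) with h | h
        · have hwv : (w i : ℕ) = (v i : ℕ) + 1 := by simp only [hw_def]; omega
          rw [U_super hwv]; norm_num
        · have hwv : w i = v i := Fin.ext (by simp only [hw_def]; have := h1 i; omega)
          rw [hwv, U_diag]
          exact hα _ (by omega)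
      have hUB : 0 < ((Umat p (N + 1) α * (Mfull p N α) ^ t).submatrix v c).det :=
        tp_mul (nice_U hα) (tn_Mpow hα t) hv hc hw hpos hrec
      have hasm : (Mfull p N α) ^ (t + 1)
          = (Ls p N α).prod * (Umat p (N + 1) α * (Mfull p N α) ^ t) := by
        rw [pow_succ', Mfull, mul_assoc]
      rw [hasm]
      refine idle_list _ ?_ ?_ hv hc hUB
      · intro G hG
        exact nice_of_mem hα G (List.mem_append.2 (Or.inl hG))
      · exact tn_mul (nice_U hα) (tn_Mpow hα t)

/-- the main chain: first lower `v` to the bottom configuration, then raise to `c`. -/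
lemma main_phase (hp : 1 ≤ p) (hα : ∀ i, 1 ≤ i → 0 < α i) :
    ∀ (t₁ t₂ : ℕ) {k : ℕ} (v c : Fin k → Fin (N + 1)), StrictMono v → StrictMono c →
      (∀ i, (v i : ℕ) ≤ (i : ℕ) + t₁) → (∀ i, (c i : ℕ) ≤ (i : ℕ) + t₂) →
      0 < (((Mfull p N α) ^ (t₁ + t₂)).submatrix v c).det := by
  intro t₁
  induction t₁ with
  | zero =>
      intro t₂ k v c hv hc hv1 hc1
      have h1 : ∀ i, (v i : ℕ) ≤ (c i : ℕ) := by
        intro i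
        have := hv1 i
        have := sm_le hc i
        omega
      have h2 : ∀ i, (c i : ℕ) ≤ (v i : ℕ) + t₂ := by
        intro i
        have := hc1 i
        have := sm_le hv i
        omega
      simpa using up_phase hα t₂ v c hv hc h1 h2
  | succ t₁ ih =>
      intro t₂ k v c hv hc hv1 hc1
      have hb : ∀ i : Fin k, max ((v i : ℕ) - 1) (i : ℕ) < N + 1 := by
        intro i
        have := sm_le hv i
        have := (v i).isLt
        omega
      set w : Fin k → Fin (N + 1) := fun i => ⟨max ((v i : ℕ) - 1) (i : ℕ), hb i⟩ with hw_def
      have hw : StrictMono w := by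
        intro i j hij
        have hv' : (v i : ℕ) < (v j : ℕ) := hv hij
        have hij' : (i : ℕ) < (j : ℕ) := hij
        have := sm_le hv i
        have := sm_le hv j
        simp only [hw_def, Fin.lt_def]
        omega
      have hw1 : ∀ i, (w i : ℕ) ≤ (i : ℕ) + t₁ := by
        intro i
        have := hv1 i
        simp only [hw_def]
        omega
      have hrec := ih t₂ w c hw hc hw1 hc1
      -- decompose the list of L factors
      obtain ⟨q, rfl⟩ : ∃ q, p = q + 1 := ⟨p - 1, by omega⟩
      have hsplit : Ls (q + 1) N α
          = Lmat (q + 1) (N + 1) 1 α ::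
            (List.range q).map (fun m => Lmat (q + 1) (N + 1) (m + 2) α) := by
        simp only [Ls, List.range_succ_eq_map, List.map_cons, List.map_map]
        constructor
      have hpos : ∀ i, 0 < Lmat (q + 1) (N + 1) 1 α (v i) (w i) := by
        intro i
        rcases Nat.lt_or_ge (i : ℕ) (v i : ℕ) with h | h
        · have hwv : (v i : ℕ) = (w i : ℕ) + 1 := by simp only [hw_def]; omega
          rw [L_sub 1 hwv]
          exact hα _ (by omega)
        · have hwv : w i = v i := Fin.ext (by
            simp only [hw_def]
            have := sm_le hv i
            omega)
          rw [hwv, L_diag]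
          norm_num
      -- the tail (remaining L's and the U) acts trivially
      set Rest : List (Matrix (Fin (N + 1)) (Fin (N + 1)) ℝ) :=
        (List.range q).map (fun m => Lmat (q + 1) (N + 1) (m + 2) α) with hRest_def
      have hRestNice : ∀ G ∈ Rest ++ [Umat (q + 1) (N + 1) α],
          (∃ lo, Nice lo G) ∧ ∀ i, 0 < G i i := by
        intro G hG
        rcases List.mem_append.1 hG with hG | hG
        · simp only [hRest_def, List.mem_map, List.mem_range] at hG
          obtain ⟨m, _, rfl⟩ := hG
          exact ⟨⟨true, nice_L hα _⟩, fun i => by rw [L_diag]; norm_num⟩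
        · simp only [List.mem_singleton] at hG
          subst hG
          exact ⟨⟨false, nice_U hα⟩, fun i => by rw [U_diag]; exact hα _ (by omega)⟩
      have hmid : 0 < (((Rest ++ [Umat (q + 1) (N + 1) α]).prod
            * (Mfull (q + 1) N α) ^ (t₁ + t₂)).submatrix w c).det :=
        idle_list _ hRestNice (tn_Mpow hα _) hw hc hrec
      have hasm : (Mfull (q + 1) N α) ^ (t₁ + 1 + t₂)
          = Lmat (q + 1) (N + 1) 1 α *
            ((Rest ++ [Umat (q + 1) (N + 1) α]).prod * (Mfull (q + 1) N α) ^ (t₁ + t₂)) := by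
        have : t₁ + 1 + t₂ = (t₁ + t₂) + 1 := by omega
        rw [this, pow_succ', Mfull, hsplit, List.prod_cons, List.prod_append,
          List.prod_singleton]
        simp only [hRest_def]
        noncomm_ring
      rw [hasm]
      exact tp_mul (nice_L hα 1)
        (tn_list_mul _ (fun G hG => (hRestNice G hG).1) (tn_Mpow hα _))
        hv hc hw hpos hmid

end Osc

theorem stmt_10
    (p N : ℕ) (hp : 1 ≤ p)
    (α : ℕ → ℝ) (hα : ∀ i, 1 ≤ i → 0 < α i)
    (M : Matrix (Fin (N + 1)) (Fin (N + 1)) ℝ)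
    (hfact : M = (((List.range p).map fun k => Lmat p (N + 1) (k + 1) α).prod)
      * Umat p (N + 1) α) :
    Oscillatory M := by
  have hM : M = Osc.Mfull p N α := hfact
  subst hM
  clear hfact
  have htp : TotallyPos ((Osc.Mfull p N α) ^ (N + (N + 1))) := by
    intro k r c hr hc
    refine Osc.main_phase hp hα N (N + 1) r c hr hc ?_ ?_
    · intro i; have := (r i).isLt; have := Osc.sm_le hr i; omega
    · intro i; have := (c i).isLt; omega
  refine ⟨?_, ?_, N + (N + 1), by omega, htp⟩
  · rw [Osc.Mfull_eq]
    intro k r c hr hc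
    have := Osc.tn_list_mul (Osc.Ls p N α ++ [Umat p (N + 1) α])
      (fun G hG => (Osc.nice_of_mem hα G hG).1) Osc.tn_one
    simpa using this k r c hr hc
  · intro hdet
    have h1 : (0 : ℝ) < (((Osc.Mfull p N α) ^ (N + (N + 1))).submatrix id id).det :=
      htp (N + 1) id id strictMono_id strictMono_id
    rw [Matrix.submatrix_id_id, Matrix.det_pow, hdet,
      zero_pow (by omega : N + (N + 1) ≠ 0)] at h1
    exact lt_irrefl 0 h1
end

section
/- (Darboux transformations) Assume T^{[N]} = L_1^{[N]} L_2^{[N]} ⋯ L_p^{[N]} U^{[N]} is a positive bidiagonal factorization. For k ∈ {1,…,p} define the Darboux transformation T̂^{[N,k]} := L_{k+1}^{[N]} ⋯ L_p^{[N]} U^{[N]} L_1^{[N]} ⋯ L_k^{[N]}. Then: (i) T̂^{[N,k]} is oscillatory; (ii) det(x·I_{N+1} − T̂^{[N,k]}) = B_{N+1}(x), i.e. the characteristic polynomial of T̂^{[N,k]} is B_{N+1}; (iii) if w is a left eigenvector of T^{[N]} with eigenvalue λ, then w·L_1^{[N]}⋯L_k^{[N]} is a left eigenvector of T̂^{[N,k]}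 with eigenvalue λ. -/
open Polynomial

noncomputable def truncM (T : ℕ → ℕ → ℝ) (N : ℕ) : Matrix (Fin (N + 1)) (Fin (N + 1)) ℝ :=
  Matrix.of fun i j : Fin (N + 1) => T (i : ℕ) (j : ℕ)

noncomputable def Darboux (p sz : ℕ) (α : ℕ → ℝ) (k : ℕ) : Matrix (Fin sz) (Fin sz) ℝ :=
  (((List.range' (k + 1) (p - k)).map fun j => Lmat p sz j α).prod) * Umat p sz α *
    (((List.range' 1 k).map fun j => Lmat p sz j α).prod)


open Finset Matrix Equiv

open Finset Matrix Equiv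

noncomputable def SMset (k n : ℕ) : Finset (Fin k → Fin n) :=
  letI := Classical.decPred (α := Fin k → Fin n) StrictMono
  Finset.univ.filter StrictMono

lemma mem_SMset {k n : ℕ} {s : Fin k → Fin n} : s ∈ SMset k n ↔ StrictMono s := by
  classical
  simp [SMset]

theorem cauchyBinet {k n : ℕ} (M : Matrix (Fin k) (Fin n) ℝ) (N : Matrix (Fin n) (Fin k) ℝ) :
    (M * N).det = ∑ s ∈ SMset k n, (M.submatrix id s).det * (N.submatrix s id).det := by
  classical
  have hA : (M * N).det
      = ∑ p : Fin k → Fin n, (∏ i, N (p i) i) * (M.submatrix id p).det := by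
    rw [Matrix.det_apply']
    simp only [Matrix.mul_apply]
    calc ∑ σ : Perm (Fin k), (Perm.sign σ : ℝ) * ∏ i, ∑ x, M (σ i) x * N x i
        = ∑ σ : Perm (Fin k), (Perm.sign σ : ℝ) *
            ∑ p ∈ Fintype.piFinset (fun _ : Fin k => (univ : Finset (Fin n))),
              ∏ i, M (σ i) (p i) * N (p i) i := by
          simp only [Finset.prod_univ_sum]
      _ = ∑ p : Fin k → Fin n, ∑ σ : Perm (Fin k),
            (Perm.sign σ : ℝ) * ∏ i, M (σ i) (p i) * N (p i) i := by
          simp only [Fintype.piFinset_univ, Finset.mul_sum]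
          rw [Finset.sum_comm]
      _ = ∑ p : Fin k → Fin n, (∏ i, N (p i) i) * (M.submatrix id p).det := by
          refine Finset.sum_congr rfl fun p _ => ?_
          rw [Matrix.det_apply']
          simp only [Matrix.submatrix_apply, id_eq, Finset.mul_sum]
          refine Finset.sum_congr rfl fun σ _ => ?_
          rw [Finset.prod_mul_distrib]
          ring
  rw [hA]
  rw [← Finset.sum_filter_add_sum_filter_not Finset.univ (fun p : Fin k → Fin n => Function.Injective p)]
  have h0 : ∑ p ∈ Finset.univ.filter (fun p : Fin k → Fin n => ¬ Function.Injective p),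
      (∏ i, N (p i) i) * (M.submatrix id p).det = 0 := by
    refine Finset.sum_eq_zero fun p hp => ?_
    have hp2 := (Finset.mem_filter.mp hp).2
    simp only [Function.Injective] at hp2
    push_neg at hp2
    obtain ⟨i, j, hij, hne⟩ := hp2
    have : (M.submatrix id p).det = 0 :=
      Matrix.det_zero_of_column_eq hne (fun a => by simp [Matrix.submatrix_apply, hij])
    rw [this, mul_zero]
  rw [h0, add_zero]
  -- now the bijection
  have key : ∑ q ∈ (SMset k n) ×ˢ (univ : Finset (Perm (Fin k))),
        (∏ i, N ((q.1 ∘ q.2) i) i) * (M.submatrix id (q.1 ∘ q.2)).det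
      = ∑ p ∈ Finset.univ.filter (fun p : Fin k → Fin n => Function.Injective p),
        (∏ i, N (p i) i) * (M.submatrix id p).det := by
    refine Finset.sum_nbij (fun q => q.1 ∘ q.2) ?_ ?_ ?_ ?_
    · rintro ⟨s, τ⟩ hq
      simp only [Finset.mem_product, mem_SMset] at hq
      simp only [Finset.mem_filter, Finset.mem_univ, true_and]
      exact hq.1.injective.comp τ.injective
    · rintro ⟨s, τ⟩ hq ⟨s', τ'⟩ hq' heq
      simp only [Finset.coe_product, Set.mem_prod, Finset.mem_coe, mem_SMset] at hq hq'
      have hs : s = s' := by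
        have hcard : (Finset.image s Finset.univ).card = k := by
          rw [Finset.card_image_of_injective _ hq.1.injective, Finset.card_univ, Fintype.card_fin]
        have him : Finset.image s Finset.univ = Finset.image s' Finset.univ := by
          ext x
          simp only [Finset.mem_image, Finset.mem_univ, true_and]
          constructor
          · rintro ⟨a, rfl⟩
            exact ⟨τ' (τ.symm a), by
              have := congrFun heq (τ.symm a); simp only [Function.comp_apply] at this
              rw [← this, Equiv.apply_symm_apply]⟩
          · rintro ⟨a, rfl⟩
            exact ⟨τ (τ'.symm a), by
              have := congrFun heq (τ'.symm a); simp only [Function.comp_apply] at this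
              rw [this, Equiv.apply_symm_apply]⟩
        have e1 := Finset.orderEmbOfFin_unique hcard
          (f := s) (fun x => Finset.mem_image_of_mem s (Finset.mem_univ x)) hq.1
        have hcard' : (Finset.image s Finset.univ).card = k := hcard
        have e2 := Finset.orderEmbOfFin_unique hcard
          (f := s') (fun x => him ▸ Finset.mem_image_of_mem s' (Finset.mem_univ x)) hq'.1
        rw [e1, e2]
      subst hs
      have hτ : τ = τ' := by
        ext i
        have := congrFun heq i
        simp only [Function.comp_apply] at this
        exact congrArg Fin.val (hq.1.injective this)
      rw [hτ]
    · rintro p hp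
      simp only [Finset.coe_filter, Finset.mem_univ, true_and, Set.mem_setOf_eq] at hp
      have hcard : (Finset.image p Finset.univ).card = k := by
        rw [Finset.card_image_of_injective _ hp, Finset.card_univ, Fintype.card_fin]
      set S := Finset.image p Finset.univ with hS
      set s : Fin k → Fin n := ⇑(S.orderEmbOfFin hcard) with hsdef
      have hsmem : ∀ i, p i ∈ S := fun i => Finset.mem_image_of_mem p (Finset.mem_univ i)
      set τf : Fin k → Fin k := fun i => (S.orderIsoOfFin hcard).symm ⟨p i, hsmem i⟩ with hτf
      have hsτ : ∀ i, s (τf i) = p i := by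
        intro i
        have : ((S.orderIsoOfFin hcard) (τf i) : Fin n) = p i := by
          rw [hτf]; simp
        rw [← this, hsdef]
        rw [← Finset.coe_orderIsoOfFin_apply]
      have hτinj : Function.Injective τf := by
        intro a b hab
        apply hp
        rw [← hsτ a, ← hsτ b, hab]
      have hτbij : Function.Bijective τf := Finite.injective_iff_bijective.mp hτinj
      refine ⟨⟨s, Equiv.ofBijective τf hτbij⟩, ?_, ?_⟩
      · simp only [Finset.coe_product, Set.mem_prod, Finset.mem_coe, mem_SMset]
        exact ⟨(S.orderEmbOfFin hcard).strictMono, Finset.mem_coe.mpr (Finset.mem_univ _)⟩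
      · funext i
        simp only [Function.comp_apply, Equiv.ofBijective_apply]
        exact hsτ i
    · rintro ⟨s, τ⟩ hq
      rfl
  rw [← key, Finset.sum_product]
  refine Finset.sum_congr rfl fun s hs => ?_
  rw [mem_SMset] at hs
  have hdet : (N.submatrix s id).det = ∑ τ : Perm (Fin k), (Perm.sign τ : ℝ) * ∏ i, N (s (τ i)) i := by
    rw [Matrix.det_apply']
    refine Finset.sum_congr rfl fun τ _ => ?_
    simp [Matrix.submatrix_apply]
  rw [hdet, Finset.mul_sum]
  refine Finset.sum_congr rfl fun τ _ => ?_
  have hperm : (M.submatrix id (s ∘ τ)).det = (Perm.sign τ : ℝ) * (M.submatrix id s).det := by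
    have : M.submatrix id (s ∘ τ) = (M.submatrix id s).submatrix id τ := by
      rw [Matrix.submatrix_submatrix]; rfl
    rw [this, Matrix.det_permute']
  rw [hperm]
  simp only [Function.comp_apply]
  ring

lemma sm_le_apply {k n : ℕ} {r : Fin k → Fin n} (hr : StrictMono r) (i : Fin k) :
    (i : ℕ) ≤ (r i : ℕ) := by
  induction' hmi : (i : ℕ) with m ih generalizing i
  · exact Nat.zero_le _
  · have hmk : m < k := by omega
    have hm : (⟨m, hmk⟩ : Fin k) < i := by
      simp only [Fin.lt_def, Fin.val_mk]; omega
    have h1 := hr hm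
    have h2 := ih ⟨m, hmk⟩ rfl
    simp only [Fin.lt_def] at h1
    omega

lemma perm_eq_one_of_strictMono {k : ℕ} (σ : Equiv.Perm (Fin k))
    (h : ∀ a b : Fin k, a < b → σ a < σ b) : σ = 1 := by
  have hle : ∀ i : Fin k, (i : ℕ) ≤ (σ i : ℕ) := sm_le_apply (fun a b hab => h a b hab)
  have hsum : ∑ i : Fin k, ((σ i : ℕ)) = ∑ i : Fin k, (i : ℕ) :=
    Equiv.sum_comp σ (fun i => (i : ℕ))
  have heq : ∀ i : Fin k, ((i : ℕ)) = ((σ i : ℕ)) := by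
    intro i
    exact (Finset.sum_eq_sum_iff_of_le (fun i _ => hle i)).mp hsum.symm i (Finset.mem_univ i)
  ext i
  exact (heq i).symm

/-- minor of a "lower bidiagonal band" matrix is the product of the aligned entries -/
theorem bidiag_minor_det {n k : ℕ} (A : Matrix (Fin n) (Fin n) ℝ)
    (hA : ∀ i j : Fin n, A i j ≠ 0 → (j : ℕ) ≤ (i : ℕ) ∧ (i : ℕ) ≤ (j : ℕ) + 1)
    (r c : Fin k → Fin n) (hr : StrictMono r) (hc : StrictMono c) :
    (A.submatrix r c).det = ∏ i, A (r i) (c i) := by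
  rw [Matrix.det_apply']
  rw [Finset.sum_eq_single (1 : Equiv.Perm (Fin k))]
  · simp
  · intro σ _ hσ
    rcases em (∃ i, A (r (σ i)) (c i) = 0) with ⟨i, hz⟩ | hall
    · have hzero : (∏ i, (A.submatrix r c) (σ i) i) = 0 :=
        Finset.prod_eq_zero (Finset.mem_univ i) (by simpa using hz)
      rw [hzero, mul_zero]
    · exfalso
      push_neg at hall
      have hcond : ∀ i : Fin k, (c i : ℕ) ≤ (r (σ i) : ℕ) ∧ (r (σ i) : ℕ) ≤ (c i : ℕ) + 1 :=
        fun i => hA _ _ (hall i)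
      apply hσ
      apply perm_eq_one_of_strictMono
      intro a b hab
      by_contra hge
      push_neg at hge
      have hne' : σ b ≠ σ a := fun h => (ne_of_lt hab) (σ.injective h.symm)
      have hlt : σ b < σ a := lt_of_le_of_ne hge hne'
      have h1 := hcond a
      have h2 := hcond b
      have h3 : (r (σ b) : ℕ) < (r (σ a) : ℕ) := hr hlt
      have h4 : (c a : ℕ) < (c b : ℕ) := hc hab
      omega
  · intro h
    simp at h

/-- minor of a product -/
lemma minor_mul {n k : ℕ} (A B : Matrix (Fin n) (Fin n) ℝ) (r c : Fin k → Fin n) :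
    ((A * B).submatrix r c).det
      = ∑ s ∈ SMset k n, ((A.submatrix r s).det * (B.submatrix s c).det) := by
  have h1 := (Matrix.submatrix_mul_equiv A B r (Equiv.refl (Fin n)) c).symm
  simp only [Equiv.coe_refl] at h1
  rw [h1, cauchyBinet]
  refine Finset.sum_congr rfl fun s _ => ?_
  rw [Matrix.submatrix_submatrix, Matrix.submatrix_submatrix]
  simp [Function.comp]

lemma TotallyNonneg.mul {n : ℕ} {A B : Matrix (Fin n) (Fin n) ℝ}
    (hA : TotallyNonneg A) (hB : TotallyNonneg B) : TotallyNonneg (A * B) := by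
  intro k r c hr hc
  rw [minor_mul]
  refine Finset.sum_nonneg fun s hs => ?_
  rw [mem_SMset] at hs
  exact mul_nonneg (hA k r s hr hs) (hB k s c hs hc)

lemma mul_minor_pos {n k : ℕ} {A B : Matrix (Fin n) (Fin n) ℝ}
    (hA : TotallyNonneg A) (hB : TotallyNonneg B)
    {r s c : Fin k → Fin n} (hr : StrictMono r) (hs : StrictMono s) (hc : StrictMono c)
    (h1 : 0 < (A.submatrix r s).det) (h2 : 0 < (B.submatrix s c).det) :
    0 < ((A * B).submatrix r c).det := by
  rw [minor_mul]
  have hmem : s ∈ SMset k n := mem_SMset.mpr hs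
  refine lt_of_lt_of_le (mul_pos h1 h2) ?_
  refine Finset.single_le_sum (f := fun s' => (A.submatrix r s').det * (B.submatrix s' c).det)
    (fun s' hs' => ?_) hmem
  rw [mem_SMset] at hs'
  exact mul_nonneg (hA k r s' hr hs') (hB k s' c hs' hc)

lemma TotallyNonneg.one {n : ℕ} : TotallyNonneg (1 : Matrix (Fin n) (Fin n) ℝ) := by
  intro k r c hr hc
  rcases em (∀ i, r i = c i) with h | h
  · have : (1 : Matrix (Fin n) (Fin n) ℝ).submatrix r c = 1 := by
      ext i j
      simp only [Matrix.submatrix_apply, Matrix.one_apply]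
      by_cases hij : i = j
      · subst hij; simp [h i]
      · have : r i ≠ c j := by
          intro hrc
          apply hij
          have : r i = r j := by rw [hrc, ← h j]
          exact hr.injective this
        simp [hij, this]
    rw [this, Matrix.det_one]
    norm_num
  · push_neg at h
    obtain ⟨i0, hi0⟩ := h
    rcases em (∀ j, ∃ i, r i = c j) with hall | hnot
    · exfalso
      have hcardr : (Finset.image r Finset.univ).card = k := by
        rw [Finset.card_image_of_injective _ hr.injective, Finset.card_univ, Fintype.card_fin]
      have hsub : Finset.image c Finset.univ ⊆ Finset.image r Finset.univ := by
        intro x hx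
        simp only [Finset.mem_image, Finset.mem_univ, true_and] at hx ⊢
        obtain ⟨j, rfl⟩ := hx
        exact hall j
      have hcardc : (Finset.image c Finset.univ).card = k := by
        rw [Finset.card_image_of_injective _ hc.injective, Finset.card_univ, Fintype.card_fin]
      have him : Finset.image c Finset.univ = Finset.image r Finset.univ :=
        Finset.eq_of_subset_of_card_le hsub (by rw [hcardr, hcardc])
      have e1 := Finset.orderEmbOfFin_unique hcardr
        (f := r) (fun x => Finset.mem_image_of_mem r (Finset.mem_univ x)) hr
      have e2 := Finset.orderEmbOfFin_unique hcardr
        (f := c) (fun x => him ▸ Finset.mem_image_of_mem c (Finset.mem_univ x)) hc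
      exact hi0 (by rw [e1, e2])
    · push_neg at hnot
      obtain ⟨j, hj⟩ := hnot
      have hz : ((1 : Matrix (Fin n) (Fin n) ℝ).submatrix r c).det = 0 :=
        Matrix.det_eq_zero_of_column_eq_zero j (fun i => by
          simp only [Matrix.submatrix_apply, Matrix.one_apply]
          exact if_neg (hj i))
      rw [hz]

lemma submatrix_one_det_eq_one {n k : ℕ} {r : Fin k → Fin n} (hr : StrictMono r) :
    ((1 : Matrix (Fin n) (Fin n) ℝ).submatrix r r).det = 1 := by
  have : (1 : Matrix (Fin n) (Fin n) ℝ).submatrix r r = 1 :=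
    Matrix.submatrix_one r hr.injective
  rw [this, Matrix.det_one]

/-- lower bidiagonal with positive diagonal and subdiagonal -/
def LB {n : ℕ} (A : Matrix (Fin n) (Fin n) ℝ) : Prop :=
  (∀ i j : Fin n, A i j ≠ 0 → (j : ℕ) ≤ (i : ℕ) ∧ (i : ℕ) ≤ (j : ℕ) + 1) ∧
  (∀ i, 0 < A i i) ∧ (∀ i j : Fin n, (i : ℕ) = (j : ℕ) + 1 → 0 < A i j)

def UB {n : ℕ} (A : Matrix (Fin n) (Fin n) ℝ) : Prop :=
  (∀ i j : Fin n, A i j ≠ 0 → (i : ℕ) ≤ (j : ℕ) ∧ (j : ℕ) ≤ (i : ℕ) + 1) ∧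
  (∀ i, 0 < A i i) ∧ (∀ i j : Fin n, (j : ℕ) = (i : ℕ) + 1 → 0 < A i j)

lemma LB.entry_nonneg {n : ℕ} {A : Matrix (Fin n) (Fin n) ℝ} (h : LB A) (i j : Fin n) :
    0 ≤ A i j := by
  rcases em (A i j = 0) with hz | hz
  · rw [hz]
  · obtain ⟨hji, hij⟩ := h.1 i j hz
    rcases em ((i : ℕ) = (j : ℕ)) with he | he
    · have : i = j := Fin.ext he
      subst this
      exact le_of_lt (h.2.1 i)
    · have : (i : ℕ) = (j : ℕ) + 1 := by omega
      exact le_of_lt (h.2.2 i j this)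

lemma LB.minor_det {n k : ℕ} {A : Matrix (Fin n) (Fin n) ℝ} (h : LB A)
    (r c : Fin k → Fin n) (hr : StrictMono r) (hc : StrictMono c) :
    (A.submatrix r c).det = ∏ i, A (r i) (c i) :=
  bidiag_minor_det A h.1 r c hr hc

lemma LB.tn {n : ℕ} {A : Matrix (Fin n) (Fin n) ℝ} (h : LB A) : TotallyNonneg A := by
  intro k r c hr hc
  rw [h.minor_det r c hr hc]
  exact Finset.prod_nonneg fun i _ => h.entry_nonneg _ _

lemma LB.minor_pos {n k : ℕ} {A : Matrix (Fin n) (Fin n) ℝ} (h : LB A)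
    {r c : Fin k → Fin n} (hr : StrictMono r) (hc : StrictMono c)
    (hcond : ∀ i, (c i : ℕ) ≤ (r i : ℕ) ∧ (r i : ℕ) ≤ (c i : ℕ) + 1) :
    0 < (A.submatrix r c).det := by
  rw [h.minor_det r c hr hc]
  refine Finset.prod_pos fun i _ => ?_
  rcases em ((r i : ℕ) = (c i : ℕ)) with he | he
  · have : r i = c i := Fin.ext he
    rw [this]; exact h.2.1 _
  · exact h.2.2 _ _ (by have := hcond i; omega)

lemma UB.transpose_lb {n : ℕ} {A : Matrix (Fin n) (Fin n) ℝ} (h : UB A) : LB Aᵀ := by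
  refine ⟨fun i j hz => h.1 j i (by simpa [Matrix.transpose_apply] using hz), fun i => h.2.1 i,
    fun i j hij => h.2.2 j i hij⟩

lemma UB.tn {n : ℕ} {A : Matrix (Fin n) (Fin n) ℝ} (h : UB A) : TotallyNonneg A := by
  intro k r c hr hc
  have := h.transpose_lb.tn k c r hc hr
  rwa [← Matrix.det_transpose, Matrix.transpose_submatrix] at this

lemma UB.minor_pos {n k : ℕ} {A : Matrix (Fin n) (Fin n) ℝ} (h : UB A)
    {r c : Fin k → Fin n} (hr : StrictMono r) (hc : StrictMono c)
    (hcond : ∀ i, (r i : ℕ) ≤ (c i : ℕ) ∧ (c i : ℕ) ≤ (r i : ℕ) + 1) :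
    0 < (A.submatrix r c).det := by
  have := h.transpose_lb.minor_pos hc hr hcond
  rwa [← Matrix.det_transpose, Matrix.transpose_submatrix] at this

lemma tn_list_prod {n : ℕ} (l : List (Matrix (Fin n) (Fin n) ℝ))
    (h : ∀ M ∈ l, TotallyNonneg M) : TotallyNonneg l.prod := by
  induction l with
  | nil => simpa using TotallyNonneg.one
  | cons M l ih =>
      rw [List.prod_cons]
      exact (h M (List.mem_cons_self)).mul (ih fun M' hM' => h M' (List.mem_cons_of_mem _ hM'))

/-- staying put through a product of LB matrices -/
lemma lb_list_stay {n k : ℕ} (l : List (Matrix (Fin n) (Fin n) ℝ))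
    (h : ∀ M ∈ l, LB M) {s : Fin k → Fin n} (hs : StrictMono s) :
    0 < ((l.prod).submatrix s s).det := by
  induction l with
  | nil => rw [List.prod_nil, submatrix_one_det_eq_one hs]; norm_num
  | cons M l ih =>
      rw [List.prod_cons]
      refine mul_minor_pos (h M (List.mem_cons_self)).tn
        (tn_list_prod l fun M' hM' => (h M' (List.mem_cons_of_mem _ hM')).tn)
        hs hs hs ?_ (ih fun M' hM' => h M' (List.mem_cons_of_mem _ hM'))
      exact (h M (List.mem_cons_self)).minor_pos hs hs (fun i => ⟨le_refl _, Nat.le_succ _⟩)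

/-- one step down through a nonempty product of LB matrices -/
lemma lb_list_down {n k : ℕ} (M : Matrix (Fin n) (Fin n) ℝ) (l : List (Matrix (Fin n) (Fin n) ℝ))
    (hM : LB M) (h : ∀ M' ∈ l, LB M')
    {s s' : Fin k → Fin n} (hs : StrictMono s) (hs' : StrictMono s')
    (hcond : ∀ i, (s' i : ℕ) ≤ (s i : ℕ) ∧ (s i : ℕ) ≤ (s' i : ℕ) + 1) :
    0 < (((M :: l).prod).submatrix s s').det := by
  rw [List.prod_cons]
  exact mul_minor_pos hM.tn (tn_list_prod l fun M' hM' => (h M' hM').tn) hs hs' hs'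
    (hM.minor_pos hs hs' hcond) (lb_list_stay l h hs')

lemma tn_pow {n : ℕ} {A : Matrix (Fin n) (Fin n) ℝ} (hA : TotallyNonneg A) (t : ℕ) :
    TotallyNonneg (A ^ t) := by
  induction t with
  | zero => simpa [pow_zero] using (TotallyNonneg.one (n := n))
  | succ t ih => rw [pow_succ]; exact ih.mul hA

lemma pow_down {n : ℕ} {A : Matrix (Fin n) (Fin n) ℝ} (hTN : TotallyNonneg A)
    (h1 : ∀ {k : ℕ} (s s' : Fin k → Fin n), StrictMono s → StrictMono s' →
      (∀ i, (s' i : ℕ) ≤ (s i : ℕ) ∧ (s i : ℕ) ≤ (s' i : ℕ) + 1) →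
      0 < (A.submatrix s s').det) :
    ∀ (t : ℕ) {k : ℕ} (s s' : Fin k → Fin n), StrictMono s → StrictMono s' →
      (∀ i, (s' i : ℕ) ≤ (s i : ℕ) ∧ (s i : ℕ) ≤ (s' i : ℕ) + t) →
      0 < ((A ^ t).submatrix s s').det := by
  intro t
  induction t with
  | zero =>
      intro k s s' hs hs' hcond
      have : s = s' := funext fun i => Fin.ext (by have := hcond i; omega)
      subst this
      rw [pow_zero, submatrix_one_det_eq_one hs]
      norm_num
  | succ t ih =>
      intro k s s' hs hs' hcond
      have hmidlt : ∀ i : Fin k, max (s' i : ℕ) ((s i : ℕ) - t) < n :=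
        fun i => Nat.max_lt.mpr ⟨(s' i).2, lt_of_le_of_lt (Nat.sub_le _ _) (s i).2⟩
      set mid : Fin k → Fin n := fun i => ⟨max (s' i : ℕ) ((s i : ℕ) - t), hmidlt i⟩ with hmid
      have hmid_sm : StrictMono mid := by
        intro a b hab
        have h1' : (s' a : ℕ) < (s' b : ℕ) := hs' hab
        have h2' : (s a : ℕ) < (s b : ℕ) := hs hab
        simp only [hmid, Fin.lt_def, Fin.val_mk]
        omega
      rw [pow_succ]
      refine mul_minor_pos (tn_pow hTN t) hTN hs hmid_sm hs' ?_ ?_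
      · exact ih s mid hs hmid_sm (fun i => by
          have := hcond i
          simp only [hmid, Fin.val_mk]
          omega)
      · exact h1 mid s' hmid_sm hs' (fun i => by
          have := hcond i
          simp only [hmid, Fin.val_mk]
          omega)

lemma pow_up {n : ℕ} {A : Matrix (Fin n) (Fin n) ℝ} (hTN : TotallyNonneg A)
    (h1 : ∀ {k : ℕ} (s s' : Fin k → Fin n), StrictMono s → StrictMono s' →
      (∀ i, (s i : ℕ) ≤ (s' i : ℕ) ∧ (s' i : ℕ) ≤ (s i : ℕ) + 1) →
      0 < (A.submatrix s s').det) :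
    ∀ (t : ℕ) {k : ℕ} (s s' : Fin k → Fin n), StrictMono s → StrictMono s' →
      (∀ i, (s i : ℕ) ≤ (s' i : ℕ) ∧ (s' i : ℕ) ≤ (s i : ℕ) + t) →
      0 < ((A ^ t).submatrix s s').det := by
  intro t
  induction t with
  | zero =>
      intro k s s' hs hs' hcond
      have : s = s' := funext fun i => Fin.ext (by have := hcond i; omega)
      subst this
      rw [pow_zero, submatrix_one_det_eq_one hs]
      norm_num
  | succ t ih =>
      intro k s s' hs hs' hcond
      have hmidlt : ∀ i : Fin k, min (s' i : ℕ) ((s i : ℕ) + t) < n :=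
        fun i => lt_of_le_of_lt (Nat.min_le_left _ _) (s' i).2
      set mid : Fin k → Fin n := fun i => ⟨min (s' i : ℕ) ((s i : ℕ) + t), hmidlt i⟩ with hmid
      have hmid_sm : StrictMono mid := by
        intro a b hab
        have h1' : (s' a : ℕ) < (s' b : ℕ) := hs' hab
        have h2' : (s a : ℕ) < (s b : ℕ) := hs hab
        simp only [hmid, Fin.lt_def, Fin.val_mk]
        omega
      rw [pow_succ]
      refine mul_minor_pos (tn_pow hTN t) hTN hs hmid_sm hs' ?_ ?_
      · exact ih s mid hs hmid_sm (fun i => by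
          have := hcond i
          simp only [hmid, Fin.val_mk]
          omega)
      · exact h1 mid s' hmid_sm hs' (fun i => by
          have := hcond i
          simp only [hmid, Fin.val_mk]
          omega)

lemma tp_of_down_up {n : ℕ} {A : Matrix (Fin n) (Fin n) ℝ} (hTN : TotallyNonneg A)
    (hdown : ∀ {k : ℕ} (s s' : Fin k → Fin n), StrictMono s → StrictMono s' →
      (∀ i, (s' i : ℕ) ≤ (s i : ℕ) ∧ (s i : ℕ) ≤ (s' i : ℕ) + 1) →
      0 < (A.submatrix s s').det)
    (hup : ∀ {k : ℕ} (s s' : Fin k → Fin n), StrictMono s → StrictMono s' →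
      (∀ i, (s i : ℕ) ≤ (s' i : ℕ) ∧ (s' i : ℕ) ≤ (s i : ℕ) + 1) →
      0 < (A.submatrix s s').det) :
    TotallyPos (A ^ (n + n)) := by
  intro k r c hr hc
  have hkn : k ≤ n := by
    have := Fintype.card_le_of_injective r hr.injective
    simpa using this
  have hbotlt : ∀ i : Fin k, (i : ℕ) < n := fun i => lt_of_lt_of_le i.2 hkn
  set bot : Fin k → Fin n := fun i => ⟨(i : ℕ), hbotlt i⟩ with hbot
  have hbot_sm : StrictMono bot := by
    intro a b hab
    rw [Fin.lt_def] at hab ⊢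
    exact hab
  rw [pow_add]
  refine mul_minor_pos (tn_pow hTN n) (tn_pow hTN n) hr hbot_sm hc ?_ ?_
  · refine pow_down hTN hdown n r bot hr hbot_sm (fun i => ?_)
    refine ⟨sm_le_apply hr i, ?_⟩
    simp only [hbot, Fin.val_mk]
    have := (r i).2
    omega
  · refine pow_up hTN hup n bot c hbot_sm hc (fun i => ?_)
    refine ⟨sm_le_apply hc i, ?_⟩
    simp only [hbot, Fin.val_mk]
    have := (c i).2
    omega

open Polynomial

lemma Lmat_LB (p sz j : ℕ) (α : ℕ → ℝ) (hα : ∀ i, 1 ≤ i → 0 < α i) :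
    LB (Lmat p sz j α) := by
  refine ⟨?_, ?_, ?_⟩
  · intro a b hz
    simp only [Lmat, Matrix.of_apply] at hz
    by_cases h1 : (a : ℕ) = (b : ℕ)
    · omega
    · by_cases h2 : (a : ℕ) = (b : ℕ) + 1
      · omega
      · simp [h1, h2] at hz
  · intro i
    simp [Lmat]
  · intro a b hab
    have hne : (a : ℕ) ≠ (b : ℕ) := by omega
    simp only [Lmat, Matrix.of_apply, if_neg hne, if_pos hab]
    exact hα _ (by omega)

lemma Umat_UB (p sz : ℕ) (α : ℕ → ℝ) (hα : ∀ i, 1 ≤ i → 0 < α i) :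
    UB (Umat p sz α) := by
  refine ⟨?_, ?_, ?_⟩
  · intro a b hz
    simp only [Umat, Matrix.of_apply] at hz
    by_cases h1 : (b : ℕ) = (a : ℕ) + 1
    · omega
    · by_cases h2 : (a : ℕ) = (b : ℕ)
      · omega
      · simp [h1, h2] at hz
  · intro i
    have h1 : ¬ ((i : ℕ) = (i : ℕ) + 1) := by omega
    simp only [Umat, Matrix.of_apply, if_neg h1, if_pos rfl]
    exact hα _ (by omega)
  · intro a b hab
    simp only [Umat, Matrix.of_apply, if_pos hab]
    norm_num

-- structural lemmas for the Darboux matrix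
lemma darboux_tn {n : ℕ} (Hi Lo : List (Matrix (Fin n) (Fin n) ℝ)) (U : Matrix (Fin n) (Fin n) ℝ)
    (hHi : ∀ M ∈ Hi, LB M) (hU : UB U) (hLo : ∀ M ∈ Lo, LB M) :
    TotallyNonneg (Hi.prod * U * Lo.prod) :=
  ((tn_list_prod Hi fun M hM => (hHi M hM).tn).mul hU.tn).mul
    (tn_list_prod Lo fun M hM => (hLo M hM).tn)

lemma darboux_down1 {n k : ℕ} (Hi Lo : List (Matrix (Fin n) (Fin n) ℝ))
    (U : Matrix (Fin n) (Fin n) ℝ)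
    (hHi : ∀ M ∈ Hi, LB M) (hU : UB U) (hLo : ∀ M ∈ Lo, LB M) (hne : Lo ≠ [])
    (s s' : Fin k → Fin n) (hs : StrictMono s) (hs' : StrictMono s')
    (hcond : ∀ i, (s' i : ℕ) ≤ (s i : ℕ) ∧ (s i : ℕ) ≤ (s' i : ℕ) + 1) :
    0 < (((Hi.prod * U * Lo.prod)).submatrix s s').det := by
  obtain ⟨M0, Lo', rfl⟩ := List.exists_cons_of_ne_nil hne
  refine mul_minor_pos ((tn_list_prod Hi fun M hM => (hHi M hM).tn).mul hU.tn)
    (tn_list_prod _ fun M hM => (hLo M hM).tn) hs hs hs' ?_ ?_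
  · refine mul_minor_pos (tn_list_prod Hi fun M hM => (hHi M hM).tn) hU.tn hs hs hs ?_ ?_
    · exact lb_list_stay Hi hHi hs
    · exact hU.minor_pos hs hs (fun i => ⟨le_refl _, Nat.le_succ _⟩)
  · exact lb_list_down M0 Lo' (hLo M0 (List.mem_cons_self))
      (fun M hM => hLo M (List.mem_cons_of_mem _ hM)) hs hs' hcond

lemma darboux_up1 {n k : ℕ} (Hi Lo : List (Matrix (Fin n) (Fin n) ℝ))
    (U : Matrix (Fin n) (Fin n) ℝ)
    (hHi : ∀ M ∈ Hi, LB M) (hU : UB U) (hLo : ∀ M ∈ Lo, LB M)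
    (s s' : Fin k → Fin n) (hs : StrictMono s) (hs' : StrictMono s')
    (hcond : ∀ i, (s i : ℕ) ≤ (s' i : ℕ) ∧ (s' i : ℕ) ≤ (s i : ℕ) + 1) :
    0 < (((Hi.prod * U * Lo.prod)).submatrix s s').det := by
  refine mul_minor_pos ((tn_list_prod Hi fun M hM => (hHi M hM).tn).mul hU.tn)
    (tn_list_prod _ fun M hM => (hLo M hM).tn) hs hs' hs' ?_ ?_
  · refine mul_minor_pos (tn_list_prod Hi fun M hM => (hHi M hM).tn) hU.tn hs hs hs' ?_ ?_
    · exact lb_list_stay Hi hHi hs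
    · exact hU.minor_pos hs hs' hcond
  · exact lb_list_stay Lo hLo hs'

lemma darboux_oscillatory_core {n : ℕ} (Hi Lo : List (Matrix (Fin n) (Fin n) ℝ))
    (U : Matrix (Fin n) (Fin n) ℝ)
    (hHi : ∀ M ∈ Hi, LB M) (hU : UB U) (hLo : ∀ M ∈ Lo, LB M) (hne : Lo ≠ [])
    (hdet : (Hi.prod * U * Lo.prod).det ≠ 0) (hn : 0 < n) :
    Oscillatory (Hi.prod * U * Lo.prod) := by
  refine ⟨darboux_tn Hi Lo U hHi hU hLo, hdet, n + n, by omega, ?_⟩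
  exact tp_of_down_up (darboux_tn Hi Lo U hHi hU hLo)
    (fun s s' hs hs' hcond => darboux_down1 Hi Lo U hHi hU hLo hne s s' hs hs' hcond)
    (fun s s' hs hs' hcond => darboux_up1 Hi Lo U hHi hU hLo s s' hs hs' hcond)

lemma Lmat_det (p sz j : ℕ) (α : ℕ → ℝ) : (Lmat p sz j α).det = 1 := by
  have h : (Lmat p sz j α).BlockTriangular OrderDual.toDual := by
    intro a b hab
    have hlt : (a : ℕ) < (b : ℕ) := hab
    simp only [Lmat, Matrix.of_apply]
    rw [if_neg (by omega), if_neg (by omega)]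
  rw [Matrix.det_of_lowerTriangular _ h]
  have : ∀ i : Fin sz, Lmat p sz j α i i = 1 := fun i => by simp [Lmat]
  simp [this]

lemma Umat_det (p sz : ℕ) (α : ℕ → ℝ) :
    (Umat p sz α).det = ∏ i : Fin sz, α (1 + (i : ℕ) * (p + 1)) := by
  have h : (Umat p sz α).BlockTriangular id := by
    intro a b hab
    have hlt : (b : ℕ) < (a : ℕ) := hab
    simp only [Umat, Matrix.of_apply]
    rw [if_neg (by omega), if_neg (by omega)]
  rw [Matrix.det_of_upperTriangular h]
  refine Finset.prod_congr rfl fun i _ => ?_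
  simp only [Umat, Matrix.of_apply]
  rw [if_neg (by omega)]
  simp

lemma list_prod_det {n : ℕ} (l : List (Matrix (Fin n) (Fin n) ℝ)) :
    (l.prod).det = (l.map Matrix.det).prod := by
  induction l with
  | nil => simp
  | cons M l ih => simp [Matrix.det_mul, ih]

lemma Lmat_list_det_one {n : ℕ} (l : List ℕ) (p : ℕ) (α : ℕ → ℝ) :
    ((l.map fun j => Lmat p n j α).prod).det = 1 := by
  rw [list_prod_det]
  induction l with
  | nil => simp
  | cons a l ih =>
      simp only [List.map_cons, List.map_map, List.prod_cons, Lmat_det, one_mul]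
      simpa using ih

/-- characteristic polynomial is invariant under cyclic permutation when one factor has det 1 -/
lemma charpoly_comm {n : ℕ} (P Q : Matrix (Fin n) (Fin n) ℝ) (hP : P.det = 1) :
    (P * Q).charpoly = (Q * P).charpoly := by
  have key : (P.map C) * Matrix.charmatrix (Q * P) = Matrix.charmatrix (P * Q) * (P.map C) := by
    unfold Matrix.charmatrix
    rw [Matrix.mul_sub, Matrix.sub_mul]
    congr 1
    · exact ((Matrix.scalar_commute (X : ℝ[X]) (fun r' => Commute.all _ _) (P.map C)).eq).symm
    · simp only [RingHom.mapMatrix_apply]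
      rw [← Matrix.map_mul, ← Matrix.map_mul, ← Matrix.mul_assoc]
  have hdet : (P.map C).det = 1 := by
    have := (C : ℝ →+* ℝ[X]).map_det P
    rw [hP] at this
    simp only [RingHom.mapMatrix_apply] at this
    rw [← this, Polynomial.C_1]
  have := congrArg Matrix.det key
  rw [Matrix.det_mul, Matrix.det_mul, hdet, one_mul, mul_one] at this
  unfold Matrix.charpoly
  rw [this]

lemma det_split {R : Type*} [CommRing R] {a b : ℕ} (M : Matrix (Fin (a + b)) (Fin (a + b)) R)
    (h : ∀ i j : Fin (a + b), (i : ℕ) < a → a ≤ (j : ℕ) → M i j = 0) :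
    M.det = (M.submatrix (fun i : Fin a => (⟨(i : ℕ), by omega⟩ : Fin (a + b)))
                         (fun j : Fin a => (⟨(j : ℕ), by omega⟩ : Fin (a + b)))).det *
            (M.submatrix (fun i : Fin b => (⟨a + (i : ℕ), by omega⟩ : Fin (a + b)))
                         (fun j : Fin b => (⟨a + (j : ℕ), by omega⟩ : Fin (a + b)))).det := by
  rw [← Matrix.det_submatrix_equiv_self finSumFinEquiv M]
  have heq : M.submatrix finSumFinEquiv finSumFinEquiv =
      Matrix.fromBlocks
        (M.submatrix (fun i : Fin a => (⟨(i : ℕ), by omega⟩ : Fin (a + b)))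
                     (fun j : Fin a => (⟨(j : ℕ), by omega⟩ : Fin (a + b))))
        0
        (M.submatrix (fun i : Fin b => (⟨a + (i : ℕ), by omega⟩ : Fin (a + b)))
                     (fun j : Fin a => (⟨(j : ℕ), by omega⟩ : Fin (a + b))))
        (M.submatrix (fun i : Fin b => (⟨a + (i : ℕ), by omega⟩ : Fin (a + b)))
                     (fun j : Fin b => (⟨a + (j : ℕ), by omega⟩ : Fin (a + b)))) := by
    ext i j
    cases i with
    | inl i =>
        cases j with
        | inl j =>
            simp only [Matrix.submatrix_apply, Matrix.fromBlocks_apply₁₁, finSumFinEquiv_apply_left]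
            congr 1 <;> exact Fin.ext (by simp)
        | inr j =>
            simp only [Matrix.submatrix_apply, Matrix.fromBlocks_apply₁₂, Matrix.zero_apply,
              finSumFinEquiv_apply_left, finSumFinEquiv_apply_right]
            exact h _ _ (by simp) (by simp)
    | inr i =>
        cases j with
        | inl j =>
            simp only [Matrix.submatrix_apply, Matrix.fromBlocks_apply₂₁,
              finSumFinEquiv_apply_left, finSumFinEquiv_apply_right]
            congr 1 <;> exact Fin.ext (by simp)
        | inr j =>
            simp only [Matrix.submatrix_apply, Matrix.fromBlocks_apply₂₂,
              finSumFinEquiv_apply_right]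
            congr 1 <;> exact Fin.ext (by simp)
  rw [heq, Matrix.det_fromBlocks_zero₁₂]

lemma charpoly_eq_B
    (p : ℕ) (T : ℕ → ℕ → ℝ)
    (hT1 : ∀ n, T n (n + 1) = 1)
    (hTsup : ∀ n m, n + 1 < m → T n m = 0)
    (hTsub : ∀ n m, m + p < n → T n m = 0)
    (B : ℕ → Polynomial ℝ)
    (hB0 : B 0 = 1)
    (hBrec : ∀ n, B (n + 1) = (X - C (T n n)) * B n
      - ∑ j ∈ Finset.Icc 1 p, (if j ≤ n then C (T n (n - j)) * B (n - j) else 0)) :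
    ∀ n, (truncM T n).charpoly = B (n + 1) := by
  intro n
  induction n using Nat.strong_induction_on with
  | _ n IH =>
  match n, IH with
  | 0, _ =>
    have h1 : (truncM T 0).charpoly = X - C (T 0 0) := by
      unfold Matrix.charpoly
      rw [Matrix.det_fin_one]
      rw [Matrix.charmatrix_apply_eq]
      rfl
    rw [h1, hBrec 0, hB0]
    have h2 : ∑ j ∈ Finset.Icc 1 p, (if j ≤ 0 then C (T 0 (0 - j)) * B (0 - j) else 0)
        = (0 : ℝ[X]) := by
      refine Finset.sum_eq_zero fun j hj => ?_
      rw [Finset.mem_Icc] at hj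
      rw [if_neg (by omega)]
    rw [h2]
    ring
  | (m + 1), IH =>
    set A := Matrix.charmatrix (truncM T (m + 1)) with hA
    -- the minors
    have minor_castSucc : ∀ j : Fin (m + 1),
        (A.submatrix Fin.castSucc (Fin.castSucc j).succAbove).det
          = (-1 : ℝ[X]) ^ (m + 1 - (j : ℕ)) * B (j : ℕ) := by
      intro j
      set a := (j : ℕ) with ha
      have hab : a + (m + 1 - a) = m + 1 := by omega
      set b := m + 1 - a with hb
      set e : Fin (a + b) ≃ Fin (m + 1) := finCongr hab with he
      have hdet := Matrix.det_submatrix_equiv_self e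
        (A.submatrix Fin.castSucc (Fin.castSucc j).succAbove)
      rw [← hdet]
      set M' := (A.submatrix Fin.castSucc (Fin.castSucc j).succAbove).submatrix e e with hM'
      -- entry formula for M'
      have hcol : ∀ y : Fin (m + 1),
          (((Fin.castSucc j).succAbove y : Fin (m + 2)) : ℕ)
            = if (y : ℕ) < a then (y : ℕ) else (y : ℕ) + 1 := by
        intro y
        rcases lt_or_ge (y : ℕ) a with hy | hy
        · rw [Fin.succAbove_of_castSucc_lt, if_pos hy]
          · simp
          · rw [Fin.lt_def]; exact hy
        · rw [Fin.succAbove_of_le_castSucc, if_neg (by omega)]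
          · simp
          · rw [Fin.le_def]; exact hy
      have hentry : ∀ x y : Fin (a + b), M' x y =
          (if ((x : ℕ) : ℕ) = (if (y : ℕ) < a then (y : ℕ) else (y : ℕ) + 1)
           then X - C (T (x : ℕ) (x : ℕ))
           else - C (T (x : ℕ) (if (y : ℕ) < a then (y : ℕ) else (y : ℕ) + 1))) := by
        intro x y
        have hcol' := hcol (e y)
        have hxval : ((Fin.castSucc (e x) : Fin (m + 2)) : ℕ) = (x : ℕ) := by simp [he]
        have heyval : ((e y : Fin (m+1)) : ℕ) = (y : ℕ) := by simp [he]
        rw [heyval] at hcol'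
        simp only [hM', Matrix.submatrix_apply]
        by_cases hxy : ((x : ℕ)) = (if (y : ℕ) < a then (y : ℕ) else (y : ℕ) + 1)
        · rw [if_pos hxy]
          have : (Fin.castSucc (e x)) = ((Fin.castSucc j).succAbove (e y)) :=
            Fin.ext (by rw [hxval, hcol']; exact hxy)
          rw [← this, hA, Matrix.charmatrix_apply_eq]
          have : truncM T (m + 1) (Fin.castSucc (e x)) (Fin.castSucc (e x)) = T (x : ℕ) (x : ℕ) := by
            simp only [truncM, Matrix.of_apply, hxval]
          rw [this]
        · rw [if_neg hxy]
          have hne : (Fin.castSucc (e x)) ≠ ((Fin.castSucc j).succAbove (e y)) := by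
            intro hcon
            apply hxy
            rw [← hxval, ← hcol', hcon]
          rw [hA, Matrix.charmatrix_apply_ne _ _ _ hne]
          have : truncM T (m + 1) (Fin.castSucc (e x)) ((Fin.castSucc j).succAbove (e y))
              = T (x : ℕ) (if (y : ℕ) < a then (y : ℕ) else (y : ℕ) + 1) := by
            simp only [truncM, Matrix.of_apply, hxval, hcol']
          rw [this]
      -- zero block
      have hzero : ∀ x y : Fin (a + b), (x : ℕ) < a → a ≤ (y : ℕ) → M' x y = 0 := by
        intro x y hx hy
        rw [hentry x y]
        have hnotlt : ¬ ((y : ℕ) < a) := by omega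
        simp only [if_neg hnotlt]
        rw [if_neg (by omega)]
        have : T (x : ℕ) ((y : ℕ) + 1) = 0 := hTsup _ _ (by omega)
        rw [this]
        simp
      rw [det_split M' hzero]
      -- upper-left block = B a
      have hUL : (M'.submatrix (fun i : Fin a => (⟨(i : ℕ), by omega⟩ : Fin (a + b)))
                               (fun j' : Fin a => (⟨(j' : ℕ), by omega⟩ : Fin (a + b)))).det
          = B a := by
        rcases Nat.eq_zero_or_pos a with ha0 | hapos
        · haveI : IsEmpty (Fin a) := ⟨fun x => absurd x.2 (by omega)⟩
          rw [Matrix.det_isEmpty, ha0, hB0]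
        · obtain ⟨a', ha'⟩ : ∃ a', a = a' + 1 := ⟨a - 1, by omega⟩
          set UL := M'.submatrix (fun i : Fin a => (⟨(i : ℕ), by omega⟩ : Fin (a + b)))
                                 (fun j' : Fin a => (⟨(j' : ℕ), by omega⟩ : Fin (a + b))) with hULdef
          have hULdet := Matrix.det_submatrix_equiv_self (finCongr ha'.symm) UL
          rw [← hULdet]
          have hblock : UL.submatrix (finCongr ha'.symm) (finCongr ha'.symm)
              = Matrix.charmatrix (truncM T a') := by
            ext x y
            rw [Matrix.submatrix_apply, hULdef, Matrix.submatrix_apply, hentry]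
            have hxv : ((finCongr ha'.symm x : Fin a) : ℕ) = (x : ℕ) := rfl
            have hyv : ((finCongr ha'.symm y : Fin a) : ℕ) = (y : ℕ) := rfl
            simp only [Fin.val_mk, hxv, hyv]
            have hylt : (y : ℕ) < a := by have := y.2; omega
            rw [if_pos hylt]
            by_cases hxy : (x : ℕ) = (y : ℕ)
            · rw [if_pos hxy]
              have hxy' : x = y := Fin.ext hxy
              subst hxy'
              rw [Matrix.charmatrix_apply_eq]
              simp [truncM]
            · rw [if_neg hxy]
              rw [Matrix.charmatrix_apply_ne _ _ _ (fun hcon => hxy (congrArg Fin.val hcon))]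
              simp [truncM]
          rw [hblock, ha']
          exact IH a' (by omega)
      -- lower-right block
      have hLR : (M'.submatrix (fun i : Fin b => (⟨a + (i : ℕ), by omega⟩ : Fin (a + b)))
                               (fun j' : Fin b => (⟨a + (j' : ℕ), by omega⟩ : Fin (a + b)))).det
          = (-1 : ℝ[X]) ^ b := by
        set D := M'.submatrix (fun i : Fin b => (⟨a + (i : ℕ), by omega⟩ : Fin (a + b)))
                              (fun j' : Fin b => (⟨a + (j' : ℕ), by omega⟩ : Fin (a + b))) with hD
        have htri : D.BlockTriangular OrderDual.toDual := by
          intro x y hxy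
          have hlt : (x : ℕ) < (y : ℕ) := hxy
          rw [hD, Matrix.submatrix_apply, hentry]
          simp only [Fin.val_mk]
          have hnl : ¬ (a + (y : ℕ) < a) := by omega
          simp only [if_neg hnl]
          rw [if_neg (by omega)]
          have : T (a + (x : ℕ)) (a + (y : ℕ) + 1) = 0 := hTsup _ _ (by omega)
          rw [this]
          simp
        rw [Matrix.det_of_lowerTriangular _ htri]
        have hdiag : ∀ x : Fin b, D x x = -1 := by
          intro x
          rw [hD, Matrix.submatrix_apply, hentry]
          simp only [Fin.val_mk]
          have hnl : ¬ (a + (x : ℕ) < a) := by omega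
          simp only [if_neg hnl]
          rw [if_neg (by omega)]
          have : T (a + (x : ℕ)) (a + (x : ℕ) + 1) = 1 := hT1 _
          rw [this]
          simp
        calc ∏ x : Fin b, D x x = ∏ _x : Fin b, (-1 : ℝ[X]) :=
              Finset.prod_congr rfl fun x _ => hdiag x
          _ = (-1 : ℝ[X]) ^ b := by rw [Finset.prod_const, Finset.card_univ, Fintype.card_fin]
      rw [hUL, hLR]
      ring
    -- the last minor
    have minor_last : (A.submatrix Fin.castSucc (Fin.last (m + 1)).succAbove).det = B (m + 1) := by
      have hblock : A.submatrix Fin.castSucc (Fin.last (m + 1)).succAbove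
          = Matrix.charmatrix (truncM T m) := by
        rw [Fin.succAbove_last]
        ext x y
        rw [Matrix.submatrix_apply]
        by_cases hxy : x = y
        · subst hxy
          rw [hA, Matrix.charmatrix_apply_eq, Matrix.charmatrix_apply_eq]
          simp [truncM]
        · rw [hA, Matrix.charmatrix_apply_ne _ _ _ (fun hcon => hxy (Fin.castSucc_injective _ hcon)),
            Matrix.charmatrix_apply_ne _ _ _ hxy]
          simp [truncM]
      rw [hblock]
      exact IH m (by omega)
    -- expand along the last row
    have hexp := Matrix.det_succ_row A (Fin.last (m + 1))
    rw [Fin.succAbove_last] at hexp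
    have hcharp : (truncM T (m + 1)).charpoly = A.det := rfl
    rw [hcharp, hexp, Fin.sum_univ_castSucc]
    -- last term
    have hlastval : ((Fin.last (m + 1) : Fin (m + 2)) : ℕ) = m + 1 := rfl
    have hAll : A (Fin.last (m + 1)) (Fin.last (m + 1)) = X - C (T (m + 1) (m + 1)) := by
      rw [hA, Matrix.charmatrix_apply_eq]
      simp [truncM]
    have hlast_term : (-1 : ℝ[X]) ^ (((Fin.last (m + 1) : Fin (m + 2)) : ℕ)
          + ((Fin.last (m + 1) : Fin (m + 2)) : ℕ))
          * A (Fin.last (m + 1)) (Fin.last (m + 1))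
          * (A.submatrix Fin.castSucc (Fin.last (m + 1)).succAbove).det
        = (X - C (T (m + 1) (m + 1))) * B (m + 1) := by
      rw [minor_last, hAll, hlastval]
      rw [Even.neg_one_pow ⟨m + 1, rfl⟩]
      ring
    rw [hlast_term]
    -- other terms
    have hterm : ∀ j : Fin (m + 1),
        (-1 : ℝ[X]) ^ (((Fin.last (m + 1) : Fin (m + 2)) : ℕ) + ((Fin.castSucc j : Fin (m+2)) : ℕ))
          * A (Fin.last (m + 1)) (Fin.castSucc j)
          * (A.submatrix Fin.castSucc (Fin.castSucc j).succAbove).det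
        = -(C (T (m + 1) (j : ℕ)) * B (j : ℕ)) := by
      intro j
      have hne : (Fin.last (m + 1) : Fin (m + 2)) ≠ Fin.castSucc j := by
        intro hcon
        have := congrArg Fin.val hcon
        simp only [hlastval, Fin.coe_castSucc] at this
        omega
      have hAval : A (Fin.last (m + 1)) (Fin.castSucc j) = -C (T (m + 1) (j : ℕ)) := by
        rw [hA, Matrix.charmatrix_apply_ne _ _ _ hne]
        simp [truncM, hlastval]
      rw [minor_castSucc j, hAval, hlastval]
      have hc : (Fin.castSucc j : Fin (m + 2)) = (⟨(j : ℕ), by omega⟩ : Fin (m + 2)) := rfl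
      have hsign : (-1 : ℝ[X]) ^ ((m + 1) + ((Fin.castSucc j : Fin (m+2)) : ℕ))
          * (-1 : ℝ[X]) ^ (m + 1 - (j : ℕ)) = 1 := by
        rw [← pow_add]
        have hval : ((Fin.castSucc j : Fin (m+2)) : ℕ) = (j : ℕ) := rfl
        rw [hval]
        have hj : (j : ℕ) ≤ m := by omega
        have hexp' : (m + 1) + (j : ℕ) + (m + 1 - (j : ℕ)) = (m + 1) + (m + 1) := by omega
        rw [hexp', Even.neg_one_pow ⟨m + 1, rfl⟩]
      calc (-1 : ℝ[X]) ^ ((m + 1) + ((Fin.castSucc j : Fin (m+2)) : ℕ))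
            * (-C (T (m + 1) (j : ℕ)))
            * ((-1 : ℝ[X]) ^ (m + 1 - (j : ℕ)) * B (j : ℕ))
          = ((-1 : ℝ[X]) ^ ((m + 1) + ((Fin.castSucc j : Fin (m+2)) : ℕ))
            * (-1 : ℝ[X]) ^ (m + 1 - (j : ℕ))) * (-(C (T (m + 1) (j : ℕ)) * B (j : ℕ))) := by ring
        _ = -(C (T (m + 1) (j : ℕ)) * B (j : ℕ)) := by rw [hsign]; ring
    rw [Finset.sum_congr rfl (fun j _ => hterm j)]
    -- now the sum identity
    rw [hBrec (m + 1)]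
    have hsum : ∑ j : Fin (m + 1), C (T (m + 1) (j : ℕ)) * B (j : ℕ)
        = ∑ j' ∈ Finset.Icc 1 p,
            (if j' ≤ m + 1 then C (T (m + 1) (m + 1 - j')) * B (m + 1 - j') else 0) := by
      set f : ℕ → ℝ[X] := fun j => C (T (m + 1) j) * B j with hf
      have step1 : ∑ j : Fin (m + 1), C (T (m + 1) (j : ℕ)) * B (j : ℕ)
          = ∑ j ∈ Finset.range (m + 1), f j :=
        Fin.sum_univ_eq_sum_range f (m + 1)
      have step2 : ∑ j ∈ Finset.range (m + 1), f j
          = ∑ j' ∈ Finset.Icc 1 (m + 1), f (m + 1 - j') := by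
        refine Finset.sum_nbij' (fun j => m + 1 - j) (fun j' => m + 1 - j') ?_ ?_ ?_ ?_ ?_
        · intro j hj
          rw [Finset.mem_range] at hj
          rw [Finset.mem_Icc]
          omega
        · intro j' hj'
          rw [Finset.mem_Icc] at hj'
          rw [Finset.mem_range]
          omega
        · intro j hj
          rw [Finset.mem_range] at hj
          omega
        · intro j' hj'
          rw [Finset.mem_Icc] at hj'
          omega
        · intro j hj
          rw [Finset.mem_range] at hj
          congr 1
          omega
      set F : ℕ → ℝ[X] := fun j' => if j' ≤ m + 1 then f (m + 1 - j') else 0 with hF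
      have step3 : ∑ j' ∈ Finset.Icc 1 (m + 1), f (m + 1 - j')
          = ∑ j' ∈ Finset.Icc 1 (m + 1), F j' :=
        Finset.sum_congr rfl fun j' hj' => by
          rw [Finset.mem_Icc] at hj'
          rw [hF]
          simp only []
          rw [if_pos (by omega)]
      have hFzero : ∀ j', p < j' → F j' = 0 := by
        intro j' hpj
        rw [hF]
        simp only []
        by_cases hle : j' ≤ m + 1
        · rw [if_pos hle, hf]
          simp only []
          have : T (m + 1) (m + 1 - j') = 0 := by
            apply hTsub
            omega
          rw [this]
          simp
        · rw [if_neg hle]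
      have step4 : ∑ j' ∈ Finset.Icc 1 (m + 1), F j'
          = ∑ j' ∈ Finset.Icc 1 (max p (m + 1)), F j' := by
        refine Finset.sum_subset (Finset.Icc_subset_Icc_right (le_max_right _ _)) ?_
        intro j' hj' hnot
        rw [Finset.mem_Icc] at hj' hnot
        push_neg at hnot
        rw [hF]
        simp only []
        rw [if_neg (by omega)]
      have step5 : ∑ j' ∈ Finset.Icc 1 p,
            (if j' ≤ m + 1 then C (T (m + 1) (m + 1 - j')) * B (m + 1 - j') else 0)
          = ∑ j' ∈ Finset.Icc 1 (max p (m + 1)), F j' := by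
        refine Finset.sum_subset (Finset.Icc_subset_Icc_right (le_max_left _ _)) ?_
        intro j' hj' hnot
        rw [Finset.mem_Icc] at hj' hnot
        push_neg at hnot
        exact hFzero j' (by omega)
      rw [step1, step2, step3, step4, ← step5]
    rw [Finset.sum_neg_distrib, hsum]
    ring


theorem stmt_11
    (p : ℕ) (hp : 1 ≤ p)
    (T : ℕ → ℕ → ℝ)
    (hT1 : ∀ n, T n (n + 1) = 1)
    (hTsup : ∀ n m, n + 1 < m → T n m = 0)
    (hTsub : ∀ n m, m + p < n → T n m = 0)
    (hTlow : ∀ n, p ≤ n → T n (n - p) ≠ 0)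
    (B : ℕ → Polynomial ℝ)
    (hB0 : B 0 = 1)
    (hBrec : ∀ n, B (n + 1) = (X - C (T n n)) * B n
      - ∑ j ∈ Finset.Icc 1 p, (if j ≤ n then C (T n (n - j)) * B (n - j) else 0))
    (N : ℕ) (α : ℕ → ℝ) (hα : ∀ i, 1 ≤ i → 0 < α i)
    (hfact : truncM T N =
      (((List.range p).map fun k => Lmat p (N + 1) (k + 1) α).prod) * Umat p (N + 1) α) :
    ∀ k : ℕ, 1 ≤ k → k ≤ p →
      Oscillatory (Darboux p (N + 1) α k) ∧
      (Darboux p (N + 1) α k).charpoly = B (N + 1) ∧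
      (∀ (w : Fin (N + 1) → ℝ) (lam : ℝ),
        Matrix.vecMul w (truncM T N) = lam • w →
        Matrix.vecMul
            (Matrix.vecMul w (((List.range' 1 k).map fun j => Lmat p (N + 1) j α).prod))
            (Darboux p (N + 1) α k)
          = lam • Matrix.vecMul w
              (((List.range' 1 k).map fun j => Lmat p (N + 1) j α).prod)) := by
  intro k hk1 hkp
  set n := N + 1 with hn
  set Lo : List (Matrix (Fin n) (Fin n) ℝ) := (List.range' 1 k).map (fun j => Lmat p n j α)
    with hLo
  set Hi : List (Matrix (Fin n) (Fin n) ℝ) :=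
    (List.range' (k + 1) (p - k)).map (fun j => Lmat p n j α) with hHi
  set U : Matrix (Fin n) (Fin n) ℝ := Umat p n α with hU
  set P : Matrix (Fin n) (Fin n) ℝ := Lo.prod with hP
  set Q : Matrix (Fin n) (Fin n) ℝ := Hi.prod * U with hQ
  -- basic list identity
  have hlist : (List.range p).map (fun j => Lmat p n (j + 1) α) = Lo ++ Hi := by
    have h1 : List.range' 1 k ++ List.range' (k + 1) (p - k) = List.range' 1 p := by
      have h2 : List.range' 1 k ++ List.range' (1 + k) (p - k) = List.range' 1 (p - k + k) := by
        rw [List.range'_append_1]; congr 1; omega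
      have h3 : 1 + k = k + 1 := by omega
      have h4 : p - k + k = p := by omega
      rw [h3, h4] at h2
      exact h2
    rw [hLo, hHi, ← List.map_append, h1, List.range'_eq_map_range, List.map_map]
    refine List.map_congr_left fun x _ => ?_
    simp only [Function.comp_apply]
    rw [Nat.add_comm 1 x]
  have hfact' : truncM T N = P * Q := by
    rw [hfact, hQ, hP]
    have : ((List.range p).map fun j => Lmat p (N + 1) (j + 1) α) = Lo ++ Hi := hlist
    rw [this, List.prod_append, Matrix.mul_assoc]
  have hDar : Darboux p n α k = Q * P := by
    rw [Darboux, hQ, hP, hLo, hHi]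
  -- LB/UB facts
  have hHiLB : ∀ M ∈ Hi, LB M := by
    intro M hM
    rw [hHi, List.mem_map] at hM
    obtain ⟨j, _, rfl⟩ := hM
    exact Lmat_LB p n j α hα
  have hLoLB : ∀ M ∈ Lo, LB M := by
    intro M hM
    rw [hLo, List.mem_map] at hM
    obtain ⟨j, _, rfl⟩ := hM
    exact Lmat_LB p n j α hα
  have hUB : UB U := Umat_UB p n α hα
  have hLone : Lo ≠ [] := by
    rw [hLo]
    intro hcon
    have := congrArg List.length hcon
    simp only [List.length_map, List.length_range', List.length_nil] at this
    omega
  -- determinants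
  have hdetP : P.det = 1 := by rw [hP, hLo]; exact Lmat_list_det_one _ p α
  have hdetHi : (Hi.prod).det = 1 := by rw [hHi]; exact Lmat_list_det_one _ p α
  have hdetU : U.det = ∏ i : Fin n, α (1 + (i : ℕ) * (p + 1)) := Umat_det p n α
  have hdetUpos : 0 < U.det := by
    rw [hdetU]
    exact Finset.prod_pos fun i _ => hα _ (by omega)
  have hdetD : (Hi.prod * U * Lo.prod).det ≠ 0 := by
    rw [Matrix.det_mul, Matrix.det_mul, hdetHi, ← hP, hdetP, one_mul, mul_one]
    exact ne_of_gt hdetUpos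
  have hDar' : Darboux p n α k = Hi.prod * U * Lo.prod := by
    rw [hDar, hQ, hP]
  refine ⟨?_, ?_, ?_⟩
  · -- oscillatory
    rw [hDar']
    exact darboux_oscillatory_core Hi Lo U hHiLB hUB hLoLB hLone hdetD (by omega)
  · -- charpoly
    rw [hDar]
    have h1 : (Q * P).charpoly = (P * Q).charpoly := (charpoly_comm P Q hdetP).symm
    rw [h1, ← hfact']
    exact charpoly_eq_B p T hT1 hTsup hTsub B hB0 hBrec N
  · -- eigenvector
    intro w lam hw
    rw [hDar, Matrix.vecMul_vecMul, ← Matrix.mul_assoc, ← hfact', ← Matrix.vecMul_vecMul, hw,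
      Matrix.smul_vecMul]
end

section
/- If λ is a zero of B_{N+1}, then the row vector (B^{[1]}_{N+1}(λ), B^{[2]}_{N+1}(λ), …, B^{[N+1]}_{N+1}(λ)) is a left eigenvector of T^{[N]} with eigenvalue λ, and its last entry equals 1. -/
open Polynomial

noncomputable def Btr (T : ℕ → ℕ → ℝ) (N k : ℕ) : Polynomial ℝ :=
  if k ≤ N + 1 then
    (Matrix.of fun i j : Fin (N + 1 - k) => T (k + (i : ℕ)) (k + (j : ℕ))).charpoly
  else 0


lemma myDetCongr {s t : ℕ} (h : s = t) (M : Matrix (Fin s) (Fin s) ℝ)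
    (N : Matrix (Fin t) (Fin t) ℝ)
    (he : ∀ a b : Fin s, M a b = N ⟨a, h ▸ a.isLt⟩ ⟨b, h ▸ b.isLt⟩) :
    M.det = N.det := by
  subst h
  have : M = N := by
    ext a b
    simpa using he a b
  rw [this]

lemma myEvalCharpoly {s : ℕ} (lam : ℝ) (M : Matrix (Fin s) (Fin s) ℝ) :
    eval lam M.charpoly =
      (Matrix.of fun i j : Fin s => (if i = j then lam else 0) - M i j).det := by
  have h := RingHom.map_det (evalRingHom lam) (Matrix.charmatrix M)
  rw [Polynomial.coe_evalRingHom] at h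
  rw [Matrix.charpoly, h]
  congr 1
  ext i j
  by_cases hij : i = j
  · subst hij
    simp [Matrix.charmatrix_apply_eq]
  · simp [Matrix.charmatrix_apply_ne _ _ _ hij, hij]

lemma myMinorDet : ∀ (n : ℕ) (M : Matrix (Fin (n+1)) (Fin (n+1)) ℝ),
    (∀ i j : Fin (n+1), (i:ℕ)+1 < (j:ℕ) → M i j = 0) →
    (∀ i j : Fin (n+1), (j:ℕ) = (i:ℕ)+1 → M i j = -1) →
    ∀ i : Fin (n+1),
    (M.submatrix i.succAbove Fin.succ).det =
      (-1)^(i:ℕ) * (Matrix.of fun a b : Fin (n - (i:ℕ)) =>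
        M ⟨(i:ℕ)+1+(a:ℕ), by have := a.isLt; omega⟩
          ⟨(i:ℕ)+1+(b:ℕ), by have := b.isLt; omega⟩).det := by
  intro n
  induction n with
  | zero =>
    intro M _ _ i
    have hi : i = 0 := Fin.ext (by omega)
    subst hi
    rw [Matrix.det_fin_zero, Matrix.det_fin_zero]
    simp
  | succ n IH =>
    intro M hup hsup i
    induction i using Fin.cases with
    | zero =>
      have e1 : (-1:ℝ)^(((0 : Fin (n+2))):ℕ) = 1 := by rw [Fin.val_zero, pow_zero]
      rw [Fin.succAbove_zero, e1, one_mul]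
      exact myDetCongr (by simp) _ _ (fun a b => by
        simp only [Matrix.submatrix_apply, Matrix.of_apply]
        congr 1 <;> exact Fin.ext (by simp [Fin.val_succ]; omega))
    | succ j =>
      rw [Matrix.det_succ_row_zero]
      rw [Finset.sum_eq_single 0]
      · have h00 : (M.submatrix (Fin.succ j).succAbove Fin.succ) 0 0 = -1 := by
          rw [Matrix.submatrix_apply, Fin.succ_succAbove_zero]
          exact hsup _ _ (by simp)
        rw [h00]
        have hkey : (M.submatrix (Fin.succ j).succAbove Fin.succ).submatrix Fin.succ
            (Fin.succAbove 0) = (M.submatrix Fin.succ Fin.succ).submatrix j.succAbove Fin.succ := by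
          ext a b
          simp [Matrix.submatrix_apply, Fin.succ_succAbove_succ]
        rw [hkey]
        have hup' : ∀ a b : Fin (n+1), (a:ℕ)+1 < (b:ℕ) →
            (M.submatrix Fin.succ Fin.succ) a b = 0 := fun a b h =>
          hup _ _ (by simp [Fin.val_succ]; omega)
        have hsup' : ∀ a b : Fin (n+1), (b:ℕ) = (a:ℕ)+1 →
            (M.submatrix Fin.succ Fin.succ) a b = -1 := fun a b h =>
          hsup _ _ (by simp [Fin.val_succ]; omega)
        rw [IH (M.submatrix Fin.succ Fin.succ) hup' hsup' j]
        have hsz : n - (j:ℕ) = (n+1) - ((Fin.succ j : Fin (n+2)):ℕ) := by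
          rw [Fin.val_succ]; omega
        have hdet := myDetCongr hsz
          (Matrix.of fun a b : Fin (n - (j:ℕ)) =>
            (M.submatrix Fin.succ Fin.succ) ⟨(j:ℕ)+1+(a:ℕ), by have := a.isLt; omega⟩
              ⟨(j:ℕ)+1+(b:ℕ), by have := b.isLt; omega⟩)
          (Matrix.of fun a b : Fin ((n+1) - ((Fin.succ j : Fin (n+2)):ℕ)) =>
            M ⟨((Fin.succ j : Fin (n+2)):ℕ)+1+(a:ℕ), by have := a.isLt; omega⟩
              ⟨((Fin.succ j : Fin (n+2)):ℕ)+1+(b:ℕ), by have := b.isLt; omega⟩)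
          (fun a b => by
            simp only [Matrix.of_apply, Matrix.submatrix_apply]
            congr 1 <;> exact Fin.ext (by simp [Fin.val_succ]; omega))
        rw [hdet]
        have e2 : (-1:ℝ)^(((Fin.succ j : Fin (n+2))):ℕ) = -((-1:ℝ)^((j:ℕ))) := by
          rw [Fin.val_succ, pow_succ]; ring
        have e3 : (-1:ℝ)^(((0 : Fin (n+1))):ℕ) = 1 := by rw [Fin.val_zero, pow_zero]
        rw [e2, e3]
        ring
      · intro c _ hc
        have : (M.submatrix (Fin.succ j).succAbove Fin.succ) 0 c = 0 := by
          rw [Matrix.submatrix_apply, Fin.succ_succAbove_zero]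
          refine hup _ _ ?_
          simp only [Fin.val_zero, Fin.val_succ]
          have : (c:ℕ) ≠ 0 := fun h => hc (Fin.ext h)
          omega
        rw [this]; ring
      · intro h
        exact absurd (Finset.mem_univ _) h

lemma myHessStep (n : ℕ) (M : Matrix (Fin (n+1)) (Fin (n+1)) ℝ)
    (hup : ∀ i j : Fin (n+1), (i:ℕ)+1 < (j:ℕ) → M i j = 0)
    (hsup : ∀ i j : Fin (n+1), (j:ℕ) = (i:ℕ)+1 → M i j = -1) :
    M.det = ∑ i : Fin (n+1), M i 0 * (Matrix.of fun a b : Fin (n - (i:ℕ)) =>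
        M ⟨(i:ℕ)+1+(a:ℕ), by have := a.isLt; omega⟩
          ⟨(i:ℕ)+1+(b:ℕ), by have := b.isLt; omega⟩).det := by
  rw [Matrix.det_succ_column_zero]
  refine Finset.sum_congr rfl fun i _ => ?_
  rw [myMinorDet n M hup hsup i]
  have h1 : (-1:ℝ)^(i:ℕ) * (-1:ℝ)^(i:ℕ) = 1 := by
    rw [← pow_add]
    exact Even.neg_one_pow ⟨(i:ℕ), rfl⟩
  set d := (Matrix.of fun a b : Fin (n - (i:ℕ)) =>
        M ⟨(i:ℕ)+1+(a:ℕ), by have := a.isLt; omega⟩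
          ⟨(i:ℕ)+1+(b:ℕ), by have := b.isLt; omega⟩).det with hd
  calc (-1:ℝ)^(i:ℕ) * M i 0 * ((-1:ℝ)^(i:ℕ) * d)
      = ((-1:ℝ)^(i:ℕ) * (-1:ℝ)^(i:ℕ)) * (M i 0 * d) := by ring
    _ = M i 0 * d := by rw [h1, one_mul]

noncomputable def ccMat (T : ℕ → ℕ → ℝ) (lam : ℝ) (s : ℕ) : ℝ :=
  (Matrix.of fun i j : Fin s => (if i = j then lam else 0) - T (i:ℕ) (j:ℕ)).det

lemma myBtrZero (T : ℕ → ℕ → ℝ) (N t : ℕ) (ht : N + 1 < t) (lam : ℝ) :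
    eval lam (Btr T N t) = 0 := by
  rw [Btr, if_neg (by omega)]; simp

lemma myIccRange (F : ℕ → ℝ) (q : ℕ) :
    ∑ j ∈ Finset.Icc 1 q, F j = ∑ i ∈ Finset.range q, F (i+1) := by
  rw [← Finset.Ico_add_one_right_eq_Icc, Finset.sum_Ico_eq_sum_range]
  simp only [Nat.add_sub_cancel]
  exact Finset.sum_congr rfl fun i _ => by rw [Nat.add_comm 1 i]

lemma myBtrRec (p : ℕ) (T : ℕ → ℕ → ℝ)
    (hT1 : ∀ n, T n (n + 1) = 1)
    (hTsup : ∀ n m, n + 1 < m → T n m = 0)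
    (hTsub : ∀ n m, m + p < n → T n m = 0)
    (N : ℕ) (lam : ℝ) (k : ℕ) (hk : k ≤ N) :
    eval lam (Btr T N k) = (lam - T k k) * eval lam (Btr T N (k+1))
      - ∑ j ∈ Finset.Icc 1 p, T (k+j) k * eval lam (Btr T N (k+j+1)) := by
  obtain ⟨m, hm⟩ : ∃ m, N + 1 - k = m + 1 := ⟨N - k, by omega⟩
  have hkm : k + m = N := by omega
  have hMM : eval lam (Btr T N k) = (Matrix.of fun i j : Fin (m+1) =>
      (if i = j then lam else 0) - T (k+(i:ℕ)) (k+(j:ℕ))).det := by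
    rw [Btr, if_pos (by omega : k ≤ N+1), myEvalCharpoly]
    refine myDetCongr hm _ _ (fun a b => ?_)
    simp only [Matrix.of_apply, Fin.mk.injEq]
    rw [if_congr (by rw [Fin.ext_iff]) rfl rfl]
  rw [hMM]
  have hup : ∀ i j : Fin (m+1), (i:ℕ)+1 < (j:ℕ) → (Matrix.of fun i j : Fin (m+1) =>
      (if i = j then lam else 0) - T (k+(i:ℕ)) (k+(j:ℕ))) i j = 0 := by
    intro i j hij
    simp only [Matrix.of_apply]
    rw [if_neg (by intro h; rw [h] at hij; omega), hTsup (k+(i:ℕ)) (k+(j:ℕ)) (by omega)]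
    ring
  have hsup : ∀ i j : Fin (m+1), (j:ℕ) = (i:ℕ)+1 → (Matrix.of fun i j : Fin (m+1) =>
      (if i = j then lam else 0) - T (k+(i:ℕ)) (k+(j:ℕ))) i j = -1 := by
    intro i j hij
    simp only [Matrix.of_apply]
    rw [if_neg (by intro h; rw [h] at hij; omega), hij, show k + ((i:ℕ)+1) = (k+(i:ℕ)) + 1 from by ring,
      hT1 (k+(i:ℕ))]
    ring
  rw [myHessStep m _ hup hsup]
  have hblock : ∀ i : Fin (m+1), (Matrix.of fun a b : Fin (m - (i:ℕ)) =>
      (Matrix.of fun i' j' : Fin (m+1) => (if i' = j' then lam else 0) - T (k+(i':ℕ)) (k+(j':ℕ)))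
        ⟨(i:ℕ)+1+(a:ℕ), by have := a.isLt; omega⟩
        ⟨(i:ℕ)+1+(b:ℕ), by have := b.isLt; omega⟩).det
      = eval lam (Btr T N (k+(i:ℕ)+1)) := by
    intro i
    have hi := i.isLt
    rw [Btr, if_pos (by omega), myEvalCharpoly]
    refine myDetCongr (by omega) _ _ (fun a b => ?_)
    simp only [Matrix.of_apply, Fin.mk.injEq]
    rw [if_congr (show ((i:ℕ)+1+(a:ℕ) = (i:ℕ)+1+(b:ℕ)) ↔ ((a:ℕ) = (b:ℕ)) from by omega) rfl rfl,
      show k + ((i:ℕ)+1+(a:ℕ)) = k+(i:ℕ)+1+(a:ℕ) from by ring,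
      show k + ((i:ℕ)+1+(b:ℕ)) = k+(i:ℕ)+1+(b:ℕ) from by ring]
  simp only [hblock]
  rw [Fin.sum_univ_succ]
  simp only [Matrix.of_apply, Fin.val_zero, add_zero, Fin.val_succ, if_pos rfl,
    Fin.succ_ne_zero, if_neg (Fin.succ_ne_zero _), zero_sub, neg_mul, if_true, if_false,
    eq_self_iff_true]
  rw [Finset.sum_neg_distrib]
  have hconv : ∑ i : Fin m, T (k+((i:ℕ)+1)) k * eval lam (Btr T N (k+((i:ℕ)+1)+1))
      = ∑ j ∈ Finset.Icc 1 p, T (k+j) k * eval lam (Btr T N (k+j+1)) := by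
    rw [Fin.sum_univ_eq_sum_range (fun i => T (k+(i+1)) k * eval lam (Btr T N (k+(i+1)+1))) m,
      myIccRange]
    have e1 : ∑ i ∈ Finset.range m, T (k+(i+1)) k * eval lam (Btr T N (k+(i+1)+1))
        = ∑ i ∈ Finset.range (m+p), T (k+(i+1)) k * eval lam (Btr T N (k+(i+1)+1)) := by
      refine Finset.sum_subset (Finset.range_subset_range.2 (by omega)) (fun x hx hnx => ?_)
      have hx1 : m ≤ x := by simpa using hnx
      rw [myBtrZero T N _ (by omega), mul_zero]
    have e2 : ∑ i ∈ Finset.range p, T (k+(i+1)) k * eval lam (Btr T N (k+(i+1)+1))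
        = ∑ i ∈ Finset.range (m+p), T (k+(i+1)) k * eval lam (Btr T N (k+(i+1)+1)) := by
      refine Finset.sum_subset (Finset.range_subset_range.2 (by omega)) (fun x hx hnx => ?_)
      have hx1 : p ≤ x := by simpa using hnx
      rw [hTsub (k+(x+1)) k (by omega), zero_mul]
    rw [e1, ← e2]
  rw [hconv]
  ring

lemma myCCrec (p : ℕ) (T : ℕ → ℕ → ℝ)
    (hT1 : ∀ n, T n (n + 1) = 1)
    (hTsup : ∀ n m, n + 1 < m → T n m = 0)
    (hTsub : ∀ n m, m + p < n → T n m = 0)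
    (lam : ℝ) (n : ℕ) :
    ccMat T lam (n+1) = (lam - T n n) * ccMat T lam n
      - ∑ j ∈ Finset.Icc 1 p, (if j ≤ n then T n (n-j) * ccMat T lam (n-j) else 0) := by
  have hv : ∀ {t : ℕ} (x : Fin t), ((Fin.rev x):ℕ) = t - 1 - (x:ℕ) := by
    intro t x
    rw [Fin.val_rev]
    have := x.isLt
    omega
  have hdet : ccMat T lam (n+1) = (Matrix.of fun i j : Fin (n+1) =>
      (if i = j then lam else 0) - T (n-(j:ℕ)) (n-(i:ℕ))).det := by
    have e : (Matrix.of fun i j : Fin (n+1) =>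
        (if i = j then lam else 0) - T (n-(j:ℕ)) (n-(i:ℕ)))
        = ((Matrix.of fun i j : Fin (n+1) =>
            (if i = j then lam else 0) - T (i:ℕ) (j:ℕ)).transpose).submatrix
            Fin.revPerm Fin.revPerm := by
      ext i j
      have hi := i.isLt; have hj := j.isLt
      simp only [Matrix.submatrix_apply, Matrix.transpose_apply, Matrix.of_apply,
        Fin.revPerm_apply]
      rw [if_congr (show (i = j) ↔ (Fin.rev j = Fin.rev i) from by
          rw [Fin.ext_iff, Fin.ext_iff, hv, hv]; omega) rfl rfl,
        hv, hv]
      have e1 : n + 1 - 1 - (j:ℕ) = n - (j:ℕ) := by omega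
      have e2 : n + 1 - 1 - (i:ℕ) = n - (i:ℕ) := by omega
      rw [e1, e2]
    rw [ccMat, e, Matrix.det_submatrix_equiv_self, Matrix.det_transpose]
  rw [hdet]
  have hup : ∀ i j : Fin (n+1), (i:ℕ)+1 < (j:ℕ) → (Matrix.of fun i j : Fin (n+1) =>
      (if i = j then lam else 0) - T (n-(j:ℕ)) (n-(i:ℕ))) i j = 0 := by
    intro i j hij
    have hj := j.isLt
    simp only [Matrix.of_apply]
    rw [if_neg (by intro h; rw [h] at hij; omega),
      hTsup (n-(j:ℕ)) (n-(i:ℕ)) (by omega)]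
    ring
  have hsup : ∀ i j : Fin (n+1), (j:ℕ) = (i:ℕ)+1 → (Matrix.of fun i j : Fin (n+1) =>
      (if i = j then lam else 0) - T (n-(j:ℕ)) (n-(i:ℕ))) i j = -1 := by
    intro i j hij
    have hj := j.isLt
    simp only [Matrix.of_apply]
    rw [if_neg (by intro h; rw [h] at hij; omega), hij,
      show n - (i:ℕ) = n - ((i:ℕ)+1) + 1 from by omega, hT1]
    ring
  rw [myHessStep n _ hup hsup]
  have hblock : ∀ i : Fin (n+1), (Matrix.of fun a b : Fin (n - (i:ℕ)) =>
      (Matrix.of fun i' j' : Fin (n+1) => (if i' = j' then lam else 0) - T (n-(j':ℕ)) (n-(i':ℕ)))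
        ⟨(i:ℕ)+1+(a:ℕ), by have := a.isLt; omega⟩
        ⟨(i:ℕ)+1+(b:ℕ), by have := b.isLt; omega⟩).det
      = ccMat T lam (n - (i:ℕ)) := by
    intro i
    have hi := i.isLt
    have e : (Matrix.of fun a b : Fin (n - (i:ℕ)) =>
        (Matrix.of fun i' j' : Fin (n+1) => (if i' = j' then lam else 0) - T (n-(j':ℕ)) (n-(i':ℕ)))
          ⟨(i:ℕ)+1+(a:ℕ), by have := a.isLt; omega⟩
          ⟨(i:ℕ)+1+(b:ℕ), by have := b.isLt; omega⟩)
        = ((Matrix.of fun i' j' : Fin (n - (i:ℕ)) =>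
            (if i' = j' then lam else 0) - T (i':ℕ) (j':ℕ)).transpose).submatrix
            Fin.revPerm Fin.revPerm := by
      ext a b
      have ha := a.isLt; have hb := b.isLt
      simp only [Matrix.submatrix_apply, Matrix.transpose_apply, Matrix.of_apply,
        Fin.revPerm_apply, Fin.mk.injEq]
      rw [if_congr (show ((i:ℕ)+1+(a:ℕ) = (i:ℕ)+1+(b:ℕ)) ↔ (Fin.rev b = Fin.rev a) from by
          rw [Fin.ext_iff, hv, hv]; omega) rfl rfl,
        hv, hv,
        show n - ((i:ℕ)+1+(b:ℕ)) = n - (i:ℕ) - 1 - (b:ℕ) from by omega,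
        show n - ((i:ℕ)+1+(a:ℕ)) = n - (i:ℕ) - 1 - (a:ℕ) from by omega]
    rw [e, Matrix.det_submatrix_equiv_self, Matrix.det_transpose]
    rfl
  simp only [hblock]
  rw [Fin.sum_univ_succ]
  simp only [Matrix.of_apply, Fin.val_zero, Nat.sub_zero, Fin.val_succ, if_pos rfl,
    if_neg (Fin.succ_ne_zero _), zero_sub, neg_mul, if_true, if_false, eq_self_iff_true]
  rw [Finset.sum_neg_distrib]
  have hconv : ∑ i : Fin n, T n (n-((i:ℕ)+1)) * ccMat T lam (n-((i:ℕ)+1))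
      = ∑ j ∈ Finset.Icc 1 p, (if j ≤ n then T n (n-j) * ccMat T lam (n-j) else 0) := by
    rw [Fin.sum_univ_eq_sum_range (fun i => T n (n-(i+1)) * ccMat T lam (n-(i+1))) n,
      myIccRange]
    have e1 : ∑ i ∈ Finset.range n, T n (n-(i+1)) * ccMat T lam (n-(i+1))
        = ∑ i ∈ Finset.range n, (if i+1 ≤ n then T n (n-(i+1)) * ccMat T lam (n-(i+1)) else 0) := by
      refine Finset.sum_congr rfl fun x hx => ?_
      rw [if_pos (by simp at hx; omega)]
    have e2 : ∑ i ∈ Finset.range n, (if i+1 ≤ n then T n (n-(i+1)) * ccMat T lam (n-(i+1)) else 0)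
        = ∑ i ∈ Finset.range (n+p), (if i+1 ≤ n then T n (n-(i+1)) * ccMat T lam (n-(i+1)) else 0) := by
      refine Finset.sum_subset (Finset.range_subset_range.2 (by omega)) (fun x hx hnx => ?_)
      have hx1 : n ≤ x := by simpa using hnx
      rw [if_neg (by omega)]
    have e3 : ∑ i ∈ Finset.range p, (if i+1 ≤ n then T n (n-(i+1)) * ccMat T lam (n-(i+1)) else 0)
        = ∑ i ∈ Finset.range (n+p), (if i+1 ≤ n then T n (n-(i+1)) * ccMat T lam (n-(i+1)) else 0) := by
      refine Finset.sum_subset (Finset.range_subset_range.2 (by omega)) (fun x hx hnx => ?_)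
      have hx1 : p ≤ x := by simpa using hnx
      by_cases hxn : x+1 ≤ n
      · rw [if_pos hxn, hTsub n (n-(x+1)) (by omega), zero_mul]
      · rw [if_neg hxn]
    rw [e1, e2, ← e3]
  rw [hconv]
  ring

lemma myBcc (p : ℕ) (T : ℕ → ℕ → ℝ)
    (hT1 : ∀ n, T n (n + 1) = 1)
    (hTsup : ∀ n m, n + 1 < m → T n m = 0)
    (hTsub : ∀ n m, m + p < n → T n m = 0)
    (B : ℕ → Polynomial ℝ)
    (hB0 : B 0 = 1)
    (hBrec : ∀ n, B (n + 1) = (X - C (T n n)) * B n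
      - ∑ j ∈ Finset.Icc 1 p, (if j ≤ n then C (T n (n - j)) * B (n - j) else 0))
    (lam : ℝ) : ∀ n, eval lam (B n) = ccMat T lam n := by
  intro n
  induction n using Nat.strong_induction_on with
  | _ n IH =>
    match n with
    | 0 =>
      rw [hB0, ccMat]
      rw [Matrix.det_fin_zero]
      simp
    | Nat.succ n =>
      rw [hBrec n, myCCrec p T hT1 hTsup hTsub lam n]
      rw [eval_sub, eval_mul, eval_sub, eval_X, eval_C, IH n (by omega)]
      congr 1
      rw [Polynomial.eval_finset_sum]
      refine Finset.sum_congr rfl fun j hj => ?_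
      by_cases hjn : j ≤ n
      · rw [if_pos hjn, if_pos hjn, eval_mul, eval_C, IH (n-j) (by omega)]
      · rw [if_neg hjn, if_neg hjn, eval_zero]

theorem stmt_14
    (p : ℕ) (hp : 1 ≤ p)
    (T : ℕ → ℕ → ℝ)
    (hT1 : ∀ n, T n (n + 1) = 1)
    (hTsup : ∀ n m, n + 1 < m → T n m = 0)
    (hTsub : ∀ n m, m + p < n → T n m = 0)
    (hTlow : ∀ n, p ≤ n → T n (n - p) ≠ 0)
    (B : ℕ → Polynomial ℝ)
    (hB0 : B 0 = 1)
    (hBrec : ∀ n, B (n + 1) = (X - C (T n n)) * B n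
      - ∑ j ∈ Finset.Icc 1 p, (if j ≤ n then C (T n (n - j)) * B (n - j) else 0)) :
    ∀ (N : ℕ) (lam : ℝ), eval lam (B (N + 1)) = 0 →
      (Matrix.vecMul (fun n : Fin (N + 1) => eval lam (Btr T N ((n : ℕ) + 1))) (truncM T N)
        = lam • (fun n : Fin (N + 1) => eval lam (Btr T N ((n : ℕ) + 1)))) ∧
      eval lam (Btr T N (N + 1)) = 1 := by
  intro N lam hroot
  have hBtr0 : eval lam (Btr T N 0) = 0 := by
    have h1 : eval lam (Btr T N 0) = ccMat T lam (N+1) := by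
      rw [Btr, if_pos (by omega), myEvalCharpoly, ccMat]
      refine myDetCongr (by omega) _ _ (fun a b => ?_)
      simp only [Matrix.of_apply, Fin.mk.injEq, Nat.zero_add]
      rw [if_congr (by rw [Fin.ext_iff]) rfl rfl]
    rw [h1, ← myBcc p T hT1 hTsup hTsub B hB0 hBrec lam (N+1)]
    exact hroot
  constructor
  · funext mf
    have hmN : (mf:ℕ) ≤ N := by omega
    set m : ℕ := (mf:ℕ) with hmdef
    have hLHS : Matrix.vecMul (fun n : Fin (N + 1) => eval lam (Btr T N ((n : ℕ) + 1)))
        (truncM T N) mf = ∑ i : Fin (N+1), eval lam (Btr T N ((i:ℕ)+1)) * T (i:ℕ) m := by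
      simp [Matrix.vecMul, dotProduct, truncM, hmdef]
    rw [hLHS]
    have hRHS : (lam • (fun n : Fin (N + 1) => eval lam (Btr T N ((n : ℕ) + 1)))) mf
        = lam * eval lam (Btr T N (m+1)) := by
      simp [hmdef]
    rw [hRHS]
    have hrecm := myBtrRec p T hT1 hTsup hTsub N lam m hmN
    -- turn Fin sum into range sum
    rw [Fin.sum_univ_eq_sum_range (fun i => eval lam (Btr T N (i+1)) * T i m) (N+1)]
    -- extend / shrink
    have eA : ∑ i ∈ Finset.range (N+1), eval lam (Btr T N (i+1)) * T i m
        = ∑ i ∈ Finset.range (N+m+p+2), eval lam (Btr T N (i+1)) * T i m := by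
      refine Finset.sum_subset (Finset.range_subset_range.2 (by omega)) (fun x hx hnx => ?_)
      have hx1 : N+1 ≤ x := by simpa using hnx
      rw [myBtrZero T N (x+1) (by omega) lam, zero_mul]
    have eB : ∑ i ∈ Finset.range (m+1+p), eval lam (Btr T N (i+1)) * T i m
        = ∑ i ∈ Finset.range (N+m+p+2), eval lam (Btr T N (i+1)) * T i m := by
      refine Finset.sum_subset (Finset.range_subset_range.2 (by omega)) (fun x hx hnx => ?_)
      have hx1 : m+1+p ≤ x := by simpa using hnx
      rw [hTsub x m (by omega), mul_zero]
    rw [eA, ← eB]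
    rw [← Finset.sum_range_add_sum_Ico (fun i => eval lam (Btr T N (i+1)) * T i m)
      (show m+1 ≤ m+1+p by omega)]
    have eC : ∑ i ∈ Finset.range (m+1), eval lam (Btr T N (i+1)) * T i m
        = eval lam (Btr T N m) + eval lam (Btr T N (m+1)) * T m m := by
      rw [Finset.sum_range_succ]
      congr 1
      match m with
      | 0 => simpa using hBtr0.symm
      | Nat.succ m' =>
        rw [Finset.sum_range_succ]
        have hz : ∑ i ∈ Finset.range m', eval lam (Btr T N (i+1)) * T i (m'+1) = 0 := by
          refine Finset.sum_eq_zero (fun x hx => ?_)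
          have hx1 : x < m' := by simpa using hx
          rw [hTsup x (m'+1) (by omega), mul_zero]
        rw [hz, hT1 m', mul_one, zero_add]
    have eD : ∑ i ∈ Finset.Ico (m+1) (m+1+p), eval lam (Btr T N (i+1)) * T i m
        = ∑ j ∈ Finset.Icc 1 p, T (m+j) m * eval lam (Btr T N (m+j+1)) := by
      rw [Finset.sum_Ico_eq_sum_range, myIccRange,
        show m+1+p-(m+1) = p from by omega]
      refine Finset.sum_congr rfl fun i _ => ?_
      rw [show m+1+i+1 = m+(i+1)+1 from by omega, show m+1+i = m+(i+1) from by omega, mul_comm]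
    rw [eC, eD]
    linear_combination hrecm
  · rw [Btr, if_pos le_rfl, myEvalCharpoly]
    exact (myDetCongr (show N+1-(N+1) = 0 from by omega) _
      (Matrix.of fun _ _ : Fin 0 => (0:ℝ)) (fun a b => absurd a.isLt (by omega))).trans
      Matrix.det_fin_zero
end

section
/- (Christoffel–Darboux formulas for truncated polynomials) For every N ≥ 0: (i) the two-variable polynomial identity (x − y)·Σ_{n=0}^{N} B^{[n+1]}_{N+1}(x)·B_n(y) = B_{N+1}(x) − B_{N+1}(y) holds; (ii) the confluent identity Σ_{n=0}^{N} B^{[n+1]}_{N+1}·B_n = B'_{N+1} holds, where ' denotes the derivative of a polynomial. -/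
open Polynomial
open Polynomial

noncomputable def Mk (T : ℕ → ℕ → ℝ) (n m : ℕ) :
    Matrix (Fin (m + 1)) (Fin (m + 1)) (Polynomial ℝ) :=
  (Matrix.of fun i j : Fin (m + 1) => T (n + (i : ℕ)) (n + (j : ℕ))).charmatrix

lemma Mk_apply (T : ℕ → ℕ → ℝ) (n m : ℕ) (a b : Fin (m + 1)) :
    Mk T n m a b = (if (a : ℕ) = b then X else 0) - C (T (n + a) (n + b)) := by
  simp [Mk, Matrix.charmatrix_apply, Matrix.diagonal_apply, Fin.ext_iff]

lemma Btr_det (T : ℕ → ℕ → ℝ) {N k : ℕ} (h : k ≤ N) :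
    Btr T N k = (Mk T k (N - k)).det := by
  have h1 : N + 1 - k = N - k + 1 := by omega
  rw [Btr, if_pos (by omega : k ≤ N + 1)]
  rw [← Matrix.charpoly_reindex (finCongr h1)
    (Matrix.of fun i j : Fin (N + 1 - k) => T (k + (i : ℕ)) (k + (j : ℕ)))]
  have h2 : (Matrix.reindex (finCongr h1) (finCongr h1))
      (Matrix.of fun i j : Fin (N + 1 - k) => T (k + (i : ℕ)) (k + (j : ℕ)))
      = Matrix.of fun i j : Fin (N - k + 1) => T (k + (i : ℕ)) (k + (j : ℕ)) := by
    ext i j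
    simp [Matrix.reindex_apply]
  rw [h2]
  rfl

lemma Btr_top (T : ℕ → ℕ → ℝ) (N : ℕ) : Btr T N (N + 1) = 1 := by
  rw [Btr, if_pos le_rfl]
  haveI : IsEmpty (Fin (N + 1 - (N + 1))) := by rw [Nat.sub_self]; infer_instance
  rw [Matrix.charpoly]
  exact Matrix.det_isEmpty

lemma Btr_zero (T : ℕ → ℕ → ℝ) {N k : ℕ} (h : N + 1 < k) : Btr T N k = 0 := by
  rw [Btr, if_neg (by omega)]

lemma minor_det (T : ℕ → ℕ → ℝ) (hT1 : ∀ n, T n (n + 1) = 1)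
    (hTsup : ∀ n m, n + 1 < m → T n m = 0) :
    ∀ (i n m : ℕ) (hi : i < m + 1),
      ((Mk T n m).submatrix (Fin.succAbove ⟨i, hi⟩) Fin.succ).det
        = (-1) ^ i * Btr T (n + m) (n + i + 1) := by
  intro i
  induction i with
  | zero =>
    intro n m hi
    match m with
    | 0 =>
      have h1 : ((Mk T n 0).submatrix (Fin.succAbove ⟨0, hi⟩) Fin.succ).det = 1 :=
        Matrix.det_isEmpty
      rw [h1, Btr_top]
      norm_num
    | Nat.succ m' =>
      have hsub : (Mk T n (m' + 1)).submatrix (Fin.succAbove ⟨0, hi⟩) Fin.succ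
          = Mk T (n + 1) m' := by
        ext a b
        have h0 : (⟨0, hi⟩ : Fin (m' + 1 + 1)) = 0 := rfl
        rw [Matrix.submatrix_apply, h0, Fin.succAbove_zero, Mk_apply, Mk_apply]
        have e1 : n + (a.succ : ℕ) = n + 1 + a := by simp [Fin.val_succ]; omega
        have e2 : n + (b.succ : ℕ) = n + 1 + b := by simp [Fin.val_succ]; omega
        have e3 : ((a.succ : ℕ) = (b.succ : ℕ)) ↔ ((a : ℕ) = b) := by
          simp [Fin.val_succ]
        rw [e1, e2, if_congr e3 rfl rfl]
      rw [hsub]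
      have hd : Btr T (n + (m' + 1)) (n + 0 + 1) = (Mk T (n + 1) m').det := by
        have := Btr_det T (show n + 1 ≤ n + (m' + 1) by omega)
        have hm : n + (m' + 1) - (n + 1) = m' := by omega
        rw [hm] at this
        rw [show n + 0 + 1 = n + 1 by omega, this]
      rw [hd]
      norm_num
  | succ i ih =>
    intro n m hi
    match m, hi with
    | Nat.succ m', hi =>
      set A := (Mk T n (m' + 1)).submatrix (Fin.succAbove ⟨i + 1, hi⟩) Fin.succ with hA
      rw [Matrix.det_succ_row_zero]
      have hrow : ∀ j : Fin (m' + 1), A 0 j = - C (T n (n + (j : ℕ) + 1)) := by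
        intro j
        have h0 : Fin.succAbove ⟨i + 1, hi⟩ (0 : Fin (m' + 1)) = 0 := by
          rw [Fin.succAbove_of_castSucc_lt]
          · rfl
          · simp [Fin.lt_def]
        rw [hA, Matrix.submatrix_apply, h0, Mk_apply]
        have : ¬ ((0 : Fin (m'+1+1)) : ℕ) = (j.succ : ℕ) := by simp
        rw [if_neg this]
        have : n + (j.succ : ℕ) = n + (j : ℕ) + 1 := by simp [Fin.val_succ]; omega
        rw [this]
        simp
      rw [Finset.sum_eq_single 0]
      · -- the j = 0 term
        have h00 : A 0 0 = - C 1 := by rw [hrow 0]; simp [hT1]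
        rw [h00]
        have hsub2 : A.submatrix Fin.succ ((0 : Fin (m' + 1)).succAbove)
            = (Mk T (n + 1) m').submatrix (Fin.succAbove ⟨i, by omega⟩) Fin.succ := by
          rw [Fin.succAbove_zero, hA, Matrix.submatrix_submatrix]
          ext a b
          have hsa : Fin.succAbove ⟨i + 1, hi⟩ (Fin.succ a)
              = Fin.succ (Fin.succAbove ⟨i, by omega⟩ a) := by
            have : (⟨i + 1, hi⟩ : Fin (m' + 1 + 1)) = Fin.succ ⟨i, by omega⟩ := rfl
            rw [this, Fin.succ_succAbove_succ]
          simp only [Matrix.submatrix_apply, Function.comp_apply, hsa, Mk_apply]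
          have e1 : n + ((Fin.succ (Fin.succAbove ⟨i, by omega⟩ a)) : ℕ)
              = n + 1 + ((Fin.succAbove ⟨i, by omega⟩ a) : ℕ) := by
            simp [Fin.val_succ]; omega
          have e2 : n + ((Fin.succ (Fin.succ b)) : ℕ) = n + 1 + ((Fin.succ b) : ℕ) := by
            simp [Fin.val_succ]; omega
          have e3 : (((Fin.succ (Fin.succAbove ⟨i, by omega⟩ a)) : ℕ)
              = ((Fin.succ (Fin.succ b)) : ℕ))
              ↔ (((Fin.succAbove ⟨i, by omega⟩ a) : ℕ) = ((Fin.succ b) : ℕ)) := by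
            simp [Fin.val_succ]
          rw [e1, e2, if_congr e3 rfl rfl]
        rw [hsub2, ih n.succ m' (by omega)]
        have hidx : Btr T (n + 1 + m') (n + 1 + i + 1) = Btr T (n + (m' + 1)) (n + (i + 1) + 1) := by
          rw [show n + 1 + m' = n + (m' + 1) by omega, show n + 1 + i + 1 = n + (i + 1) + 1 by omega]
        rw [hidx]
        simp [pow_succ]
      · intro j _ hj
        have hz : T n (n + (j : ℕ) + 1) = 0 := by
          apply hTsup
          have : 0 < (j : ℕ) := by
            rcases Nat.eq_zero_or_pos (j : ℕ) with h | h
            · exact absurd (Fin.ext h) hj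
            · exact h
          omega
        rw [hrow j, hz]
        simp
      · intro h
        exact absurd (Finset.mem_univ 0) h

lemma minor_det' (T : ℕ → ℕ → ℝ) (hT1 : ∀ n, T n (n + 1) = 1)
    (hTsup : ∀ n m, n + 1 < m → T n m = 0) (n m : ℕ) (i : Fin (m + 1)) :
    ((Mk T n m).submatrix i.succAbove Fin.succ).det
      = (-1) ^ (i : ℕ) * Btr T (n + m) (n + i + 1) :=
  minor_det T hT1 hTsup i n m i.isLt

lemma Btr_rec (T : ℕ → ℕ → ℝ) (p : ℕ) (hT1 : ∀ n, T n (n + 1) = 1)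
    (hTsup : ∀ n m, n + 1 < m → T n m = 0)
    (hTsub : ∀ n m, m + p < n → T n m = 0)
    {N n : ℕ} (hn : n ≤ N) :
    Btr T N n = (X - C (T n n)) * Btr T N (n + 1)
      - ∑ j ∈ Finset.Icc 1 p, C (T (n + j) n) * Btr T N (n + j + 1) := by
  have hN : N = n + (N - n) := by omega
  set m := N - n with hm
  set g : ℕ → Polynomial ℝ := fun j => C (T (n + j) n) * Btr T N (n + j + 1) with hg
  rw [Btr_det T hn, ← hm, Matrix.det_succ_column_zero]
  have hterm : ∀ i : Fin (m + 1),
      (-1) ^ (i : ℕ) * Mk T n m i 0 * ((Mk T n m).submatrix i.succAbove Fin.succ).det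
      = Mk T n m i 0 * Btr T N (n + (i : ℕ) + 1) := by
    intro i
    rw [minor_det' T hT1 hTsup, ← hN]
    have he : ((-1 : Polynomial ℝ)) ^ ((i:ℕ) + (i:ℕ)) = 1 :=
      Even.neg_one_pow ⟨(i : ℕ), rfl⟩
    calc (-1) ^ (i:ℕ) * Mk T n m i 0 * ((-1) ^ (i:ℕ) * Btr T N (n + (i:ℕ) + 1))
        = (-1 : Polynomial ℝ) ^ ((i:ℕ) + (i:ℕ)) * (Mk T n m i 0 * Btr T N (n + (i:ℕ) + 1)) := by
          rw [pow_add]; ring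
      _ = Mk T n m i 0 * Btr T N (n + (i:ℕ) + 1) := by rw [he, one_mul]
  simp only [hterm]
  rw [Fin.sum_univ_succ]
  have h0 : Mk T n m 0 0 = X - C (T n n) := by
    rw [Mk_apply]; simp
  have hs : ∀ i : Fin m, Mk T n m i.succ 0 * Btr T N (n + (i.succ : ℕ) + 1)
      = - g ((i : ℕ) + 1) := by
    intro i
    rw [Mk_apply]
    have : ¬ ((i.succ : ℕ) = ((0 : Fin (m+1)) : ℕ)) := by simp
    rw [if_neg this]
    simp only [hg, Fin.val_succ, Fin.val_zero]
    ring_nf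
  simp only [hs, h0, Fin.val_zero, add_zero]
  rw [Finset.sum_neg_distrib, ← sub_eq_add_neg]
  congr 1
  -- ∑ i : Fin m, g (i+1) = ∑ j ∈ Icc 1 p, g j
  rw [Fin.sum_univ_eq_sum_range (fun i => g (i + 1)) m]
  have hIm : ∑ i ∈ Finset.range m, g (i + 1) = ∑ j ∈ Finset.Icc 1 m, g j := by
    rw [show Finset.Icc 1 m = Finset.Ico 1 (m+1) by rw [Finset.Ico_add_one_right_eq_Icc]]
    rw [Finset.sum_Ico_eq_sum_range]
    simp [add_comm]
  rw [hIm]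
  have hgm : ∀ j, m < j → g j = 0 := by
    intro j hj
    rw [hg]
    have : Btr T N (n + j + 1) = 0 := Btr_zero T (by omega)
    simp [this]
  have hgp : ∀ j, p < j → g j = 0 := by
    intro j hj
    rw [hg]
    have : T (n + j) n = 0 := hTsub _ _ (by omega)
    simp [this]
  have h1 : ∑ j ∈ Finset.Icc 1 (min p m), g j = ∑ j ∈ Finset.Icc 1 m, g j := by
    apply Finset.sum_subset (Finset.Icc_subset_Icc le_rfl (min_le_right _ _))
    intro x hx hnx
    simp only [Finset.mem_Icc] at hx hnx
    exact hgp x (by omega)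
  have h2 : ∑ j ∈ Finset.Icc 1 (min p m), g j = ∑ j ∈ Finset.Icc 1 p, g j := by
    apply Finset.sum_subset (Finset.Icc_subset_Icc le_rfl (min_le_left _ _))
    intro x hx hnx
    simp only [Finset.mem_Icc] at hx hnx
    exact hgm x (by omega)
  rw [← h1, h2]

lemma master (p : ℕ) (T : ℕ → ℕ → ℝ)
    (hT1 : ∀ n, T n (n + 1) = 1)
    (hTsup : ∀ n m, n + 1 < m → T n m = 0)
    (hTsub : ∀ n m, m + p < n → T n m = 0)
    (B : ℕ → Polynomial ℝ)
    (hB0 : B 0 = 1)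
    (hBrec : ∀ n, B (n + 1) = (X - C (T n n)) * B n
      - ∑ j ∈ Finset.Icc 1 p, (if j ≤ n then C (T n (n - j)) * B (n - j) else 0))
    (N : ℕ) (y : ℝ) :
    (X - C y) * ∑ n ∈ Finset.range (N + 1), Btr T N (n + 1) * C (eval y (B n))
      = Btr T N 0 - C (eval y (B (N + 1))) := by
  set f : ℕ → Polynomial ℝ := fun n => Btr T N n * C (eval y (B n)) with hf
  set u : ℕ → Polynomial ℝ := fun n => ∑ j ∈ Finset.Icc 1 p,
      C (T (n + j) n) * Btr T N (n + j + 1) * C (eval y (B n)) with hu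
  set v : ℕ → Polynomial ℝ := fun n => ∑ j ∈ Finset.Icc 1 p,
      if j ≤ n then C (T n (n - j)) * Btr T N (n + 1) * C (eval y (B (n - j))) else 0 with hv
  have hRHS : Btr T N 0 - C (eval y (B (N + 1)))
      = ∑ n ∈ Finset.range (N + 1), (f n - f (n + 1)) := by
    rw [Finset.sum_range_sub' f (N + 1)]
    simp [hf, hB0, Btr_top]
  have hterm : ∀ n ≤ N, f n - f (n + 1)
      = (X - C y) * (Btr T N (n + 1) * C (eval y (B n))) - u n + v n := by
    intro n hn
    have hBv : C (eval y (B (n + 1))) = (C y - C (T n n)) * C (eval y (B n))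
        - ∑ j ∈ Finset.Icc 1 p,
            (if j ≤ n then C (T n (n - j)) * C (eval y (B (n - j))) else 0) := by
      rw [hBrec n]
      rw [eval_sub, eval_mul, eval_sub, eval_X, eval_C, eval_finset_sum]
      rw [map_sub, map_mul, map_sub, map_sum]
      apply congrArg₂ _ rfl
      apply Finset.sum_congr rfl
      intro j _
      split_ifs with h
      · rw [eval_mul, eval_C, map_mul]
      · simp
    have hf1 : f n = ((X - C (T n n)) * Btr T N (n + 1)
        - ∑ j ∈ Finset.Icc 1 p, C (T (n + j) n) * Btr T N (n + j + 1)) * C (eval y (B n)) := by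
      show Btr T N n * C (eval y (B n)) = _
      rw [Btr_rec T p hT1 hTsup hTsub hn]
    have hf2 : f (n + 1) = Btr T N (n + 1) * ((C y - C (T n n)) * C (eval y (B n))
        - ∑ j ∈ Finset.Icc 1 p,
            (if j ≤ n then C (T n (n - j)) * C (eval y (B (n - j))) else 0)) := by
      show Btr T N (n + 1) * C (eval y (B (n + 1))) = _
      rw [hBv]
    have huv : u n = (∑ j ∈ Finset.Icc 1 p, C (T (n + j) n) * Btr T N (n + j + 1))
        * C (eval y (B n)) := by
      show (∑ j ∈ Finset.Icc 1 p,
        C (T (n + j) n) * Btr T N (n + j + 1) * C (eval y (B n))) = _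
      rw [Finset.sum_mul]
    have hvv : v n = Btr T N (n + 1) * ∑ j ∈ Finset.Icc 1 p,
        (if j ≤ n then C (T n (n - j)) * C (eval y (B (n - j))) else 0) := by
      show (∑ j ∈ Finset.Icc 1 p,
        if j ≤ n then C (T n (n - j)) * Btr T N (n + 1) * C (eval y (B (n - j))) else 0) = _
      rw [Finset.mul_sum]
      apply Finset.sum_congr rfl
      intro j _
      split_ifs with h
      · ring
      · simp
    rw [hf1, hf2, huv, hvv]
    ring
  have hcross : ∑ n ∈ Finset.range (N + 1), u n = ∑ n ∈ Finset.range (N + 1), v n := by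
    have hL : ∑ n ∈ Finset.range (N + 1), u n
        = ∑ x ∈ (Finset.range (N + 1) ×ˢ Finset.Icc 1 p).filter (fun x => x.1 + x.2 ≤ N),
            C (T (x.1 + x.2) x.1) * Btr T N (x.1 + x.2 + 1) * C (eval y (B x.1)) := by
      rw [← Finset.sum_product']
      refine (Finset.sum_filter_of_ne ?_).symm
      intro x hx hne
      by_contra hc
      apply hne
      have : Btr T N (x.1 + x.2 + 1) = 0 := Btr_zero T (by omega)
      rw [this]
      ring
    have hR : ∑ n ∈ Finset.range (N + 1), v n
        = ∑ x ∈ (Finset.range (N + 1) ×ˢ Finset.Icc 1 p).filter (fun x => x.2 ≤ x.1),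
            (if x.2 ≤ x.1 then C (T x.1 (x.1 - x.2)) * Btr T N (x.1 + 1)
              * C (eval y (B (x.1 - x.2))) else 0) := by
      rw [← Finset.sum_product']
      refine (Finset.sum_filter_of_ne ?_).symm
      intro x hx hne
      by_contra hc
      exact hne (if_neg hc)
    rw [hL, hR]
    apply Finset.sum_nbij' (fun x => (x.1 + x.2, x.2)) (fun x => (x.1 - x.2, x.2))
    · intro a ha
      simp only [Finset.mem_filter, Finset.mem_product, Finset.mem_range, Finset.mem_Icc] at ha ⊢
      omega
    · intro a ha
      simp only [Finset.mem_filter, Finset.mem_product, Finset.mem_range, Finset.mem_Icc] at ha ⊢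
      omega
    · intro a ha
      simp only [Finset.mem_filter, Finset.mem_product, Finset.mem_range, Finset.mem_Icc] at ha
      have h2 : a.1 + a.2 - a.2 = a.1 := by omega
      simp [h2]
    · intro a ha
      simp only [Finset.mem_filter, Finset.mem_product, Finset.mem_range, Finset.mem_Icc] at ha
      have h2 : a.1 - a.2 + a.2 = a.1 := by omega
      simp [h2]
    · intro a ha
      simp only [Finset.mem_filter, Finset.mem_product, Finset.mem_range, Finset.mem_Icc] at ha
      have h1 : a.2 ≤ a.1 + a.2 := by omega
      have h2 : a.1 + a.2 - a.2 = a.1 := by omega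
      rw [if_pos h1, h2]
  have hsum : ∑ n ∈ Finset.range (N + 1), (f n - f (n + 1))
      = (X - C y) * (∑ n ∈ Finset.range (N + 1), Btr T N (n + 1) * C (eval y (B n)))
        - (∑ n ∈ Finset.range (N + 1), u n) + (∑ n ∈ Finset.range (N + 1), v n) := by
    rw [Finset.mul_sum, ← Finset.sum_sub_distrib, ← Finset.sum_add_distrib]
    apply Finset.sum_congr rfl
    intro n hn
    exact hterm n (Nat.lt_succ_iff.mp (Finset.mem_range.mp hn))
  rw [hRHS, hsum, hcross]
  ring

theorem stmt_15
    (p : ℕ) (hp : 1 ≤ p)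
    (T : ℕ → ℕ → ℝ)
    (hT1 : ∀ n, T n (n + 1) = 1)
    (hTsup : ∀ n m, n + 1 < m → T n m = 0)
    (hTsub : ∀ n m, m + p < n → T n m = 0)
    (hTlow : ∀ n, p ≤ n → T n (n - p) ≠ 0)
    (B : ℕ → Polynomial ℝ)
    (hB0 : B 0 = 1)
    (hBrec : ∀ n, B (n + 1) = (X - C (T n n)) * B n
      - ∑ j ∈ Finset.Icc 1 p, (if j ≤ n then C (T n (n - j)) * B (n - j) else 0)) :
    ∀ N : ℕ,
      (∀ x y : ℝ,
        (x - y) * ∑ n ∈ Finset.range (N + 1), eval x (Btr T N (n + 1)) * eval y (B n)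
          = eval x (B (N + 1)) - eval y (B (N + 1))) ∧
      (∑ n ∈ Finset.range (N + 1), Btr T N (n + 1) * B n = derivative (B (N + 1))) := by
  intro N
  have hmaster := master p T hT1 hTsup hTsub B hB0 hBrec N
  have hB' : Btr T N 0 = B (N + 1) := by
    apply Polynomial.funext
    intro z
    have h := congrArg (eval z) (hmaster z)
    simp only [eval_mul, eval_sub, eval_X, eval_C, sub_self, zero_mul] at h
    linarith
  constructor
  · intro x y
    have h := congrArg (eval x) (hmaster y)
    rw [hB'] at h
    simp only [eval_mul, eval_sub, eval_X, eval_C, eval_finset_sum] at h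
    exact h
  · apply Polynomial.funext
    intro z
    have h := hmaster z
    rw [hB'] at h
    have hd := congrArg derivative h
    simp only [derivative_mul, derivative_sub, derivative_X, derivative_C, sub_zero,
      zero_mul, one_mul, zero_sub] at hd
    have h2 := congrArg (eval z) hd
    simp only [eval_add, eval_mul, eval_sub, eval_X, eval_C, eval_one, eval_zero, sub_self,
      zero_mul, mul_zero, sub_zero, one_mul, add_zero, eval_finset_sum] at h2
    simp only [eval_finset_sum, eval_mul, eval_C]
    convert h2 using 1
end

section
/- (Discrete moments) Assume B_{N+1} has N+1 simple real zeros λ_1 > ⋯ > λ_{N+1}. Then for every n ≥ 0 and every a ∈ {1,…,p}: Σ_{k=1}^{N+1} μ_{k,a}·(λ_k)^n = e_1ᵀ·(T^{[N]})^n·e^ν_a. -/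
open Polynomial

noncomputable def Qp (p : ℕ) (A : Fin p → ℕ → Polynomial ℝ) (n N : ℕ) : Polynomial ℝ :=
  Matrix.det (Matrix.of fun i a : Fin p =>
    if (i : ℕ) = 0 then A a n else A a (N + (i : ℕ)))

noncomputable def nuMat (p : ℕ) (A : Fin p → ℕ → Polynomial ℝ) : Matrix (Fin p) (Fin p) ℝ :=
  Matrix.of fun j a : Fin p => (A a (j : ℕ)).coeff 0

noncomputable def wfun (p : ℕ) (A : Fin p → ℕ → Polynomial ℝ) (B : ℕ → Polynomial ℝ)
    (N : ℕ) (lam : Fin (N + 1) → ℝ) (k : Fin (N + 1)) (n : ℕ) : ℝ :=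
  Polynomial.eval (lam k) (Qp p A n N) /
    ∑ l ∈ Finset.range (N + 1),
      Polynomial.eval (lam k) (Qp p A l N) * Polynomial.eval (lam k) (B l)

noncomputable def mu (p : ℕ) (A : Fin p → ℕ → Polynomial ℝ) (B : ℕ → Polynomial ℝ)
    (N : ℕ) (lam : Fin (N + 1) → ℝ) (k : Fin (N + 1)) (a : Fin p) : ℝ :=
  ∑ b : Fin p, (nuMat p A)⁻¹ a b * wfun p A B N lam k (b : ℕ)

noncomputable def enu (p : ℕ) (A : Fin p → ℕ → Polynomial ℝ) (N : ℕ) (a : Fin p) :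
    Fin (N + 1) → ℝ :=
  fun j => if hj : (j : ℕ) < p then (nuMat p A)⁻¹ a ⟨(j : ℕ), hj⟩ else 0

lemma det_row_lin {ι : Type*} {q : ℕ} (M : Matrix (Fin q) (Fin q) (Polynomial ℝ)) (j : Fin q)
    (s : Finset ι) (c : ι → Polynomial ℝ) (r : ι → Fin q → Polynomial ℝ) :
    Matrix.det (M.updateRow j fun a => ∑ l ∈ s, c l * r l a)
      = ∑ l ∈ s, c l * Matrix.det (M.updateRow j (r l)) := by
  classical
  induction s using Finset.induction_on with
  | empty =>
      simp only [Finset.sum_empty]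
      have h0 : (fun _ : Fin q => (0 : Polynomial ℝ))
          = (0 : Polynomial ℝ) • (fun _ : Fin q => (0 : Polynomial ℝ)) := by
        funext a; simp
      rw [h0, Matrix.det_updateRow_smul, zero_mul]
  | @insert k s hk ih =>
      have h1 : (fun a => ∑ l ∈ insert k s, c l * r l a)
          = (c k • r k) + (fun a => ∑ l ∈ s, c l * r l a) := by
        funext a; rw [Finset.sum_insert hk]; simp [mul_comm]
      rw [Finset.sum_insert hk, h1, Matrix.det_updateRow_add, Matrix.det_updateRow_smul, ih]

theorem stmt_16
    (p : ℕ) (hp : 1 ≤ p)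
    (T : ℕ → ℕ → ℝ)
    (hT1 : ∀ n, T n (n + 1) = 1)
    (hTsup : ∀ n m, n + 1 < m → T n m = 0)
    (hTsub : ∀ n m, m + p < n → T n m = 0)
    (hTlow : ∀ n, p ≤ n → T n (n - p) ≠ 0)
    (B : ℕ → Polynomial ℝ)
    (hB0 : B 0 = 1)
    (hBrec : ∀ n, B (n + 1) = (X - C (T n n)) * B n
      - ∑ j ∈ Finset.Icc 1 p, (if j ≤ n then C (T n (n - j)) * B (n - j) else 0))
    (A : Fin p → ℕ → Polynomial ℝ)
    (hAconst : ∀ a : Fin p, ∀ j < p, ∃ c : ℝ, A a j = C c)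
    (hAzero : ∀ a : Fin p, ∀ j : ℕ, j < (a : ℕ) → A a j = 0)
    (hAone : ∀ a : Fin p, A a (a : ℕ) = 1)
    (hArec : ∀ a : Fin p, ∀ n : ℕ,
      (if n = 0 then 0 else A a (n - 1))
        + ∑ i ∈ Finset.range (p + 1), C (T (n + i) n) * A a (n + i) = X * A a n)
    (N : ℕ) (lam : Fin (N + 1) → ℝ)
    (hroots : ∀ k, eval (lam k) (B (N + 1)) = 0)
    (hanti : StrictAnti lam)
    (hsimple : ∀ k, eval (lam k) (derivative (B (N + 1))) ≠ 0)
    (hden : ∀ k : Fin (N + 1), ∑ l ∈ Finset.range (N + 1),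
      eval (lam k) (Qp p A l N) * eval (lam k) (B l) ≠ 0) :
    ∀ (n : ℕ) (a : Fin p),
      ∑ k : Fin (N + 1), mu p A B N lam k a * (lam k) ^ n
        = Matrix.mulVec ((truncM T N) ^ n) (enu p A N a) 0 := by
  classical
  -- the subdiagonal entry
  have hc : T (N + p) N ≠ 0 := by
    have := hTlow (N + p) (by omega)
    rwa [Nat.add_sub_cancel] at this
  set c : ℝ := T (N + p) N with hc_def
  -- Qp as an updateRow determinant
  have hQdef : ∀ n, Qp p A n N =
      Matrix.det ((Matrix.of fun i a : Fin p => A a (N + (i : ℕ))).updateRow ⟨0, hp⟩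
        (fun a => A a n)) := by
    intro n
    unfold Qp
    congr 1
    apply Matrix.ext
    intro i a
    by_cases hi : i = ⟨0, hp⟩
    · subst hi; simp
    · have hiv : (i : ℕ) ≠ 0 := fun h => hi (Fin.ext h)
      simp [Matrix.updateRow_ne hi, hiv]
  -- vanishing of the Q's with repeated rows
  have hQzero : ∀ b, N < b → b < N + p → Qp p A b N = 0 := by
    intro b h1 h2
    unfold Qp
    apply Matrix.det_zero_of_row_eq (i := (⟨0, hp⟩ : Fin p)) (j := ⟨b - N, by omega⟩)
    · intro h
      have := congrArg Fin.val h
      simp at this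
      omega
    · funext a
      simp only [Matrix.of_apply]
      have hbN : b - N ≠ 0 := by omega
      have hNb : N + (b - N) = b := by omega
      simp [hbN, hNb]
  -- row relation for the B's
  have hrow : ∀ l : ℕ, l ≤ N → X * B l
      = (∑ m ∈ Finset.range (N + 1), C (T l m) * B m) + (if l = N then B (N + 1) else 0) := by
    intro l hl
    have key : X * B l = ∑ m ∈ Finset.range (l + 2), C (T l m) * B m := by
      rw [Finset.sum_range_succ, Finset.sum_range_succ, hT1 l, map_one, one_mul]
      have e1 : ∑ m ∈ Finset.range l, C (T l m) * B m
          = ∑ j ∈ Finset.Icc 1 p, (if j ≤ l then C (T l (l - j)) * B (l - j) else 0) := by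
        have step1 : ∑ m ∈ Finset.range l, C (T l m) * B m
            = ∑ j ∈ Finset.Icc 1 l, (if j ≤ l then C (T l (l - j)) * B (l - j) else 0) := by
          rw [← Finset.sum_range_reflect (fun m => C (T l m) * B m) l,
            ← Finset.Ico_add_one_right_eq_Icc, Finset.sum_Ico_eq_sum_range]
          have hll : l + 1 - 1 = l := by omega
          rw [hll]
          apply Finset.sum_congr rfl
          intro i hi
          simp only [Finset.mem_range] at hi
          rw [if_pos (by omega)]
          have h1 : l - (1 + i) = l - 1 - i := by omega
          rw [h1]
        have step2 : ∑ j ∈ Finset.Icc 1 l, (if j ≤ l then C (T l (l - j)) * B (l - j) else 0)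
            = ∑ j ∈ Finset.Icc 1 p, (if j ≤ l then C (T l (l - j)) * B (l - j) else 0) := by
          have c1 : ∑ j ∈ Finset.Icc 1 l, (if j ≤ l then C (T l (l - j)) * B (l - j) else 0)
              = ∑ j ∈ Finset.Icc 1 (max p l),
                  (if j ≤ l then C (T l (l - j)) * B (l - j) else 0) := by
            apply Finset.sum_subset
            · intro j hj; simp only [Finset.mem_Icc] at *; omega
            · intro j hj hj2
              simp only [Finset.mem_Icc] at hj hj2
              rw [if_neg (by omega)]
          have c2 : ∑ j ∈ Finset.Icc 1 p, (if j ≤ l then C (T l (l - j)) * B (l - j) else 0)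
              = ∑ j ∈ Finset.Icc 1 (max p l),
                  (if j ≤ l then C (T l (l - j)) * B (l - j) else 0) := by
            apply Finset.sum_subset
            · intro j hj; simp only [Finset.mem_Icc] at *; omega
            · intro j hj hj2
              simp only [Finset.mem_Icc] at hj hj2
              have hjl : j ≤ l := by omega
              rw [if_pos hjl, hTsub l (l - j) (by omega), map_zero, zero_mul]
          rw [c1, c2]
        rw [step1, step2]
      rw [e1, hBrec l]
      ring
    have e2 : ∑ m ∈ Finset.range (N + 2), C (T l m) * B m
        = ∑ m ∈ Finset.range (l + 2), C (T l m) * B m := by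
      symm
      apply Finset.sum_subset
      · exact Finset.range_subset_range.2 (by omega)
      · intro m hm1 hm2
        simp only [Finset.mem_range] at hm1 hm2
        rw [hTsup l m (by omega), map_zero, zero_mul]
    have e3 : C (T l (N + 1)) * B (N + 1) = (if l = N then B (N + 1) else 0) := by
      by_cases hlN : l = N
      · subst hlN; simp [hT1 l]
      · rw [if_neg hlN, hTsup l (N + 1) (by omega), map_zero, zero_mul]
    rw [key, ← e2, Finset.sum_range_succ, e3]
  -- column relation for the A's
  have hcolA : ∀ m, m ≤ N → ∀ a : Fin p,
      (∑ l ∈ Finset.range (N + 1), C (T l m) * A a l)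
        + ∑ l ∈ Finset.Ico (N + 1) (N + p + 1), C (T l m) * A a l = X * A a m := by
    intro m hm a
    have comb : (∑ l ∈ Finset.range (N + 1), C (T l m) * A a l)
        + ∑ l ∈ Finset.Ico (N + 1) (N + p + 1), C (T l m) * A a l
        = ∑ l ∈ Finset.range (N + p + 1), C (T l m) * A a l := by
      exact Finset.sum_range_add_sum_Ico _ (by omega)
    rw [comb]
    have shrink : ∑ l ∈ Finset.range (N + p + 1), C (T l m) * A a l
        = ∑ l ∈ Finset.range (m + p + 1), C (T l m) * A a l := by
      symm
      apply Finset.sum_subset (Finset.range_subset_range.2 (by omega))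
      intro l h1 h2
      simp only [Finset.mem_range] at h1 h2
      rw [hTsub l m (by omega), map_zero, zero_mul]
    rw [shrink]
    have split : ∑ l ∈ Finset.range (m + p + 1), C (T l m) * A a l
        = (∑ l ∈ Finset.range m, C (T l m) * A a l)
          + ∑ i ∈ Finset.range (p + 1), C (T (m + i) m) * A a (m + i) := by
      rw [← Finset.sum_range_add_sum_Ico _ (show m ≤ m + p + 1 by omega)]
      congr 1
      rw [Finset.sum_Ico_eq_sum_range]
      have h1 : m + p + 1 - m = p + 1 := by omega
      rw [h1]
    rw [split]
    have head : ∑ l ∈ Finset.range m, C (T l m) * A a l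
        = (if m = 0 then 0 else A a (m - 1)) := by
      rcases Nat.eq_zero_or_pos m with h0 | h0
      · subst h0; simp
      · rw [if_neg (by omega)]
        rw [Finset.sum_eq_single_of_mem (m - 1) (Finset.mem_range.2 (by omega))]
        · have e : T (m - 1) m = 1 := by
            have := hT1 (m - 1)
            rwa [Nat.sub_add_cancel h0] at this
          rw [e, map_one, one_mul]
        · intro l hl hne
          simp only [Finset.mem_range] at hl
          rw [hTsup l m (by omega), map_zero, zero_mul]
    rw [head]
    exact hArec a m
  -- column relation for the Q's
  have hcol : ∀ m, m ≤ N →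
      ∑ l ∈ Finset.range (N + 1), C (T l m) * Qp p A l N
        = X * Qp p A m N - (if m = N then C c * Qp p A (N + p) N else 0) := by
    intro m hm
    have hs1 : ∑ l ∈ Finset.range (N + 1), C (T l m) * Qp p A l N
        = Matrix.det ((Matrix.of fun i a : Fin p => A a (N + (i : ℕ))).updateRow ⟨0, hp⟩
            (fun a => ∑ l ∈ Finset.range (N + 1), C (T l m) * A a l)) := by
      rw [det_row_lin]
      exact Finset.sum_congr rfl fun l _ => by rw [hQdef l]
    have hs2 : ∑ l ∈ Finset.Ico (N + 1) (N + p + 1), C (T l m) * Qp p A l N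
        = Matrix.det ((Matrix.of fun i a : Fin p => A a (N + (i : ℕ))).updateRow ⟨0, hp⟩
            (fun a => ∑ l ∈ Finset.Ico (N + 1) (N + p + 1), C (T l m) * A a l)) := by
      rw [det_row_lin]
      exact Finset.sum_congr rfl fun l _ => by rw [hQdef l]
    have hX : X * Qp p A m N
        = Matrix.det ((Matrix.of fun i a : Fin p => A a (N + (i : ℕ))).updateRow ⟨0, hp⟩
            (fun a => X * A a m)) := by
      have e : (fun a : Fin p => X * A a m) = (X : Polynomial ℝ) • (fun a => A a m) := by
        funext a; simp
      rw [e, Matrix.det_updateRow_smul, ← hQdef m]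
    have tail : ∑ l ∈ Finset.Ico (N + 1) (N + p + 1), C (T l m) * Qp p A l N
        = (if m = N then C c * Qp p A (N + p) N else 0) := by
      rw [Finset.sum_eq_single_of_mem (N + p) (by simp only [Finset.mem_Ico]; omega)]
      · by_cases hmN : m = N
        · subst hmN; rw [if_pos rfl]
        · rw [if_neg hmN, hTsub (N + p) m (by omega), map_zero, zero_mul]
      · intro l hl hne
        simp only [Finset.mem_Ico] at hl
        rw [hQzero l (by omega) (by omega), mul_zero]
    have main : (∑ l ∈ Finset.range (N + 1), C (T l m) * Qp p A l N)
        + ∑ l ∈ Finset.Ico (N + 1) (N + p + 1), C (T l m) * Qp p A l N = X * Qp p A m N := by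
      rw [hs1, hs2, ← Matrix.det_updateRow_add]
      have e : ((fun a : Fin p => ∑ l ∈ Finset.range (N + 1), C (T l m) * A a l)
          + fun a => ∑ l ∈ Finset.Ico (N + 1) (N + p + 1), C (T l m) * A a l)
          = fun a : Fin p => X * A a m := by
        funext a
        simpa using hcolA m hm a
      rw [e, ← hX]
    rw [← tail]
    exact eq_sub_of_add_eq main
  -- the one-variable Christoffel-Darboux type identity
  have hD : ∀ y : ℝ, (X - C y) * (∑ l ∈ Finset.range (N + 1), C (eval y (Qp p A l N)) * B l)
      = C (eval y (Qp p A N N)) * B (N + 1) - C (c * eval y (Qp p A (N + p) N)) * B N := by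
    intro y
    have hw : ∀ m, m ≤ N → ∑ l ∈ Finset.range (N + 1), eval y (Qp p A l N) * T l m
        = y * eval y (Qp p A m N) - (if m = N then c * eval y (Qp p A (N + p) N) else 0) := by
      intro m hm
      have h := congrArg (eval y) (hcol m hm)
      simp only [eval_finset_sum, eval_mul, eval_sub, eval_C, eval_X, apply_ite (eval y),
        eval_zero] at h
      rw [← h]
      apply Finset.sum_congr rfl
      intro l _
      ring
    have h1 : X * (∑ l ∈ Finset.range (N + 1), C (eval y (Qp p A l N)) * B l)
        = C y * (∑ l ∈ Finset.range (N + 1), C (eval y (Qp p A l N)) * B l)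
          + C (eval y (Qp p A N N)) * B (N + 1) - C (c * eval y (Qp p A (N + p) N)) * B N := by
      calc X * (∑ l ∈ Finset.range (N + 1), C (eval y (Qp p A l N)) * B l)
          = ∑ l ∈ Finset.range (N + 1), C (eval y (Qp p A l N)) * (X * B l) := by
            rw [Finset.mul_sum]; exact Finset.sum_congr rfl fun l _ => by ring
        _ = ∑ l ∈ Finset.range (N + 1),
              (C (eval y (Qp p A l N)) * (∑ m ∈ Finset.range (N + 1), C (T l m) * B m)
                + if l = N then C (eval y (Qp p A l N)) * B (N + 1) else 0) := by
            apply Finset.sum_congr rfl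
            intro l hl
            simp only [Finset.mem_range] at hl
            rw [hrow l (by omega), mul_add, mul_ite, mul_zero]
        _ = (∑ l ∈ Finset.range (N + 1),
              C (eval y (Qp p A l N)) * (∑ m ∈ Finset.range (N + 1), C (T l m) * B m))
              + C (eval y (Qp p A N N)) * B (N + 1) := by
            rw [Finset.sum_add_distrib,
              Finset.sum_ite_eq' (Finset.range (N + 1)) N
                (fun l => C (eval y (Qp p A l N)) * B (N + 1)),
              if_pos (Finset.mem_range.2 (by omega))]
        _ = (∑ m ∈ Finset.range (N + 1),
              C (∑ l ∈ Finset.range (N + 1), eval y (Qp p A l N) * T l m) * B m)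
              + C (eval y (Qp p A N N)) * B (N + 1) := by
            congr 1
            calc ∑ l ∈ Finset.range (N + 1),
                  C (eval y (Qp p A l N)) * (∑ m ∈ Finset.range (N + 1), C (T l m) * B m)
                = ∑ l ∈ Finset.range (N + 1), ∑ m ∈ Finset.range (N + 1),
                    C (eval y (Qp p A l N) * T l m) * B m := by
                  apply Finset.sum_congr rfl
                  intro l _
                  rw [Finset.mul_sum]
                  exact Finset.sum_congr rfl fun m _ => by rw [map_mul]; ring
              _ = ∑ m ∈ Finset.range (N + 1), ∑ l ∈ Finset.range (N + 1),
                    C (eval y (Qp p A l N) * T l m) * B m := Finset.sum_comm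
              _ = ∑ m ∈ Finset.range (N + 1),
                    C (∑ l ∈ Finset.range (N + 1), eval y (Qp p A l N) * T l m) * B m := by
                  apply Finset.sum_congr rfl
                  intro m _
                  rw [← Finset.sum_mul, ← map_sum]
        _ = (∑ m ∈ Finset.range (N + 1),
              (C y * (C (eval y (Qp p A m N)) * B m)
                - if m = N then C (c * eval y (Qp p A (N + p) N)) * B m else 0))
              + C (eval y (Qp p A N N)) * B (N + 1) := by
            congr 1
            apply Finset.sum_congr rfl
            intro m hm
            simp only [Finset.mem_range] at hm
            rw [hw m (by omega), map_sub, apply_ite C, map_zero, map_mul, sub_mul, ite_mul,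
              zero_mul]
            ring_nf
        _ = C y * (∑ l ∈ Finset.range (N + 1), C (eval y (Qp p A l N)) * B l)
              + C (eval y (Qp p A N N)) * B (N + 1) - C (c * eval y (Qp p A (N + p) N)) * B N := by
            rw [Finset.sum_sub_distrib,
              Finset.sum_ite_eq' (Finset.range (N + 1)) N
                (fun m => C (c * eval y (Qp p A (N + p) N)) * B m),
              if_pos (Finset.mem_range.2 (by omega)), Finset.mul_sum]
            ring
    rw [sub_mul, h1]
    ring
  -- the product identity
  have hG : C c * Qp p A (N + p) N * B N = Qp p A N N * B (N + 1) := by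
    apply Polynomial.funext
    intro y
    have h := congrArg (eval y) (hD y)
    simp only [eval_mul, eval_sub, eval_X, eval_C, sub_self, zero_mul] at h
    simp only [eval_mul, eval_C]
    linear_combination h
  -- the key vanishing at the eigenvalues
  have hE : ∀ k, eval (lam k) (Qp p A (N + p) N) = 0 := by
    intro k
    by_contra hq
    have hBN1 : eval (lam k) (B (N + 1)) = 0 := hroots k
    have hGs := congrArg (eval (lam k)) hG
    simp only [eval_mul, eval_C, hBN1, mul_zero] at hGs
    have hBN : eval (lam k) (B N) = 0 := by
      rcases mul_eq_zero.mp hGs with h | h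
      · rcases mul_eq_zero.mp h with h' | h'
        · exact absurd h' hc
        · exact absurd h' hq
      · exact h
    have hG' := congrArg (fun f => eval (lam k) (derivative f)) hG
    simp only [derivative_mul, derivative_C, zero_mul, eval_add, eval_mul, eval_C, hBN, hBN1,
      mul_zero, zero_add, add_zero] at hG'
    have hD' := congrArg (fun f => eval (lam k) (derivative f)) (hD (lam k))
    simp only [derivative_mul, derivative_sub, derivative_X, derivative_C, sub_zero, one_mul,
      eval_add, eval_mul, eval_sub, eval_X, eval_C, sub_self, zero_mul, add_zero, mul_zero,
      hBN, hBN1, zero_add, eval_finset_sum] at hD'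
    apply hden k
    rw [hD', hG', sub_self]
  intro n a
  set V : Matrix (Fin (N + 1)) (Fin (N + 1)) ℝ :=
    Matrix.of (fun l k : Fin (N + 1) => eval (lam k) (B (l : ℕ))) with hV
  set U : Matrix (Fin (N + 1)) (Fin (N + 1)) ℝ :=
    Matrix.of (fun k j : Fin (N + 1) => eval (lam k) (Qp p A (j : ℕ) N)
      / ∑ l ∈ Finset.range (N + 1), eval (lam k) (Qp p A l N) * eval (lam k) (B l)) with hU
  have hMV : truncM T N * V = V * Matrix.diagonal lam := by
    ext l k
    rw [Matrix.mul_apply, Matrix.mul_diagonal]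
    simp only [hV, truncM, Matrix.of_apply]
    have hlN : (l : ℕ) ≤ N := by omega
    have h := congrArg (eval (lam k)) (hrow (l : ℕ) hlN)
    simp only [eval_mul, eval_X, eval_add, eval_finset_sum, eval_C,
      apply_ite (Polynomial.eval (lam k)), eval_zero, hroots k, ite_self, add_zero] at h
    rw [Fin.sum_univ_eq_sum_range (fun j => T (l : ℕ) j * eval (lam k) (B j)) (N + 1)]
    rw [← h]
    ring
  have hUV : U * V = 1 := by
    ext k k'
    rw [Matrix.mul_apply, Matrix.one_apply]
    simp only [hU, hV, Matrix.of_apply]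
    rw [Fin.sum_univ_eq_sum_range (fun j =>
      (eval (lam k) (Qp p A j N)
        / ∑ l ∈ Finset.range (N + 1), eval (lam k) (Qp p A l N) * eval (lam k) (B l))
        * eval (lam k') (B j)) (N + 1)]
    have hdiv : ∀ j, (eval (lam k) (Qp p A j N)
        / ∑ l ∈ Finset.range (N + 1), eval (lam k) (Qp p A l N) * eval (lam k) (B l))
        * eval (lam k') (B j)
        = eval (lam k) (Qp p A j N) * eval (lam k') (B j)
          / ∑ l ∈ Finset.range (N + 1), eval (lam k) (Qp p A l N) * eval (lam k) (B l) := by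
      intro j; ring
    rw [Finset.sum_congr rfl (fun j _ => hdiv j), ← Finset.sum_div]
    by_cases hkk : k = k'
    · subst hkk
      rw [if_pos rfl, div_self (hden k)]
    · rw [if_neg hkk]
      have h := congrArg (eval (lam k')) (hD (lam k))
      simp only [eval_mul, eval_sub, eval_X, eval_C, eval_finset_sum, hroots k', hE k,
        mul_zero, zero_mul, sub_zero, zero_sub, neg_zero] at h
      have hne : lam k' - lam k ≠ 0 :=
        sub_ne_zero.2 fun he => hkk (hanti.injective he).symm
      have hsum0 : ∑ j ∈ Finset.range (N + 1),
          eval (lam k) (Qp p A j N) * eval (lam k') (B j) = 0 := by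
        rcases mul_eq_zero.mp h with h' | h'
        · exact absurd h' hne
        · exact h'
      rw [hsum0, zero_div]
  have hVU : V * U = 1 := mul_eq_one_comm.mp hUV
  have hMn : ∀ m : ℕ, (truncM T N) ^ m = V * Matrix.diagonal (fun k => lam k ^ m) * U := by
    intro m
    induction m with
    | zero =>
        have e : (fun k : Fin (N + 1) => lam k ^ 0) = fun _ => (1 : ℝ) := by
          funext k; rw [pow_zero]
        rw [pow_zero, e, Matrix.diagonal_one, Matrix.mul_one, hVU]
    | succ m ih =>
        rw [pow_succ', ih, ← Matrix.mul_assoc, ← Matrix.mul_assoc, hMV,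
          Matrix.mul_assoc V _ _, Matrix.diagonal_mul_diagonal]
        have e : (fun i => lam i * lam i ^ m) = fun i => lam i ^ (m + 1) := by
          funext i; rw [pow_succ']
        rw [e]
  rw [hMn n]
  simp only [Matrix.mulVec, dotProduct]
  have hentry : ∀ j : Fin (N + 1),
      (V * Matrix.diagonal (fun k => lam k ^ n) * U) 0 j
        = ∑ k : Fin (N + 1), lam k ^ n * U k j := by
    intro j
    rw [Matrix.mul_apply]
    apply Finset.sum_congr rfl
    intro k _
    rw [Matrix.mul_diagonal]
    have hV0 : V 0 k = 1 := by
      simp only [hV, Matrix.of_apply]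
      rw [Fin.val_zero, hB0, eval_one]
    rw [hV0, one_mul]
  have hswap : ∑ j : Fin (N + 1),
      (V * Matrix.diagonal (fun k => lam k ^ n) * U) 0 j * enu p A N a j
      = ∑ k : Fin (N + 1), lam k ^ n * ∑ j : Fin (N + 1), U k j * enu p A N a j := by
    rw [Finset.sum_congr rfl (fun j _ => by rw [hentry j, Finset.sum_mul]), Finset.sum_comm]
    apply Finset.sum_congr rfl
    intro k _
    rw [Finset.mul_sum]
    apply Finset.sum_congr rfl
    intro j _
    ring
  rw [hswap]
  apply Finset.sum_congr rfl
  intro k _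
  rw [mul_comm (mu p A B N lam k a) (lam k ^ n)]
  congr 1
  set S := ∑ l ∈ Finset.range (N + 1), eval (lam k) (Qp p A l N) * eval (lam k) (B l) with hS
  set f : ℕ → ℝ := fun j => (eval (lam k) (Qp p A j N) / S)
    * (if h : j < p then (nuMat p A)⁻¹ a ⟨j, h⟩ else 0) with hf
  set g : ℕ → ℝ := fun b =>
    (if h : b < p then (nuMat p A)⁻¹ a ⟨b, h⟩ else 0) * (eval (lam k) (Qp p A b N) / S) with hg
  have hU2 : ∀ j : Fin (N + 1), U k j * enu p A N a j = f (j : ℕ) := by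
    intro j
    simp only [hU, Matrix.of_apply, enu, hf, hS]
  have hmu : mu p A B N lam k a = ∑ b ∈ Finset.range p, g b := by
    rw [mu, ← Fin.sum_univ_eq_sum_range g p]
    apply Finset.sum_congr rfl
    intro b _
    rw [hg]
    simp only []
    rw [dif_pos b.isLt, Fin.eta]
    rfl
  have hfg : ∀ j : ℕ, f j = g j := by
    intro j; rw [hf, hg]; simp only []; ring
  have hgz1 : ∀ j, N < j → j < p → g j = 0 := by
    intro j h1 h2
    have hz : Qp p A j N = 0 := hQzero j h1 (by omega)
    rw [hg]
    simp only [hz, eval_zero, zero_div, mul_zero]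
  have hgz2 : ∀ j, p ≤ j → g j = 0 := by
    intro j h1
    rw [hg]
    simp only []
    rw [dif_neg (by omega), zero_mul]
  have e1 : ∑ j ∈ Finset.range (N + 1), g j = ∑ j ∈ Finset.range (N + 1 + p), g j := by
    apply Finset.sum_subset (Finset.range_subset_range.2 (by omega))
    intro j hj1 hj2
    simp only [Finset.mem_range] at hj1 hj2
    by_cases hjp : j < p
    · exact hgz1 j (by omega) hjp
    · exact hgz2 j (by omega)
  have e2 : ∑ j ∈ Finset.range p, g j = ∑ j ∈ Finset.range (N + 1 + p), g j := by
    apply Finset.sum_subset (Finset.range_subset_range.2 (by omega))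
    intro j hj1 hj2
    simp only [Finset.mem_range] at hj1 hj2
    exact hgz2 j (by omega)
  calc mu p A B N lam k a = ∑ b ∈ Finset.range p, g b := hmu
    _ = ∑ j ∈ Finset.range (N + 1 + p), g j := e2
    _ = ∑ j ∈ Finset.range (N + 1), g j := e1.symm
    _ = ∑ j ∈ Finset.range (N + 1), f j := by
        exact Finset.sum_congr rfl fun j _ => (hfg j).symm
    _ = ∑ j : Fin (N + 1), f (j : ℕ) := (Fin.sum_univ_eq_sum_range f (N + 1)).symm
    _ = ∑ j : Fin (N + 1), U k j * enu p A N a j := by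
        exact Finset.sum_congr rfl fun j _ => (hU2 j).symm
end
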